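/- arXiv:2009.00696 — 3 statements merged into one kernel-verified Lean document; each statement's English description precedes it below -/
import Mathlib

section
/- Let S be a compact invariant set for the multiflow Φ of a differential inclusion, A an attractor in S, and R its dual repeller. Then A is the dual attractor of R: A = {x ∈ S | α_S(x) ⊄ R}. -/
open Set MeasureTheory Filter Topology

namespace DIncl

variable {E : Type*} [NormedAddCommGroup E] [NormedSpace ℝ E] [CompleteSpace E]

/-- Upper semicontinuity of a set-valued map on a set `D`. -/
def USCOn {α β : Type*} [PseudoMetricSpace α] [PseudoMetricSpace β]
    (F : α → Set β) (D : Set α) : Prop :=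
  ∀ x ∈ D, ∀ ε > 0, ∃ δ > 0, ∀ y ∈ D, dist y x < δ →
    F y ⊆ {z | ∃ w ∈ F x, dist z w < ε}

/-- The Filippov conditions on `D`: upper semicontinuous with compact, convex,
nonempty values. -/
def FilippovOn {α : Type*} [PseudoMetricSpace α] (F : α → Set E) (D : Set α) : Prop :=
  USCOn F D ∧ ∀ x ∈ D, IsCompact (F x) ∧ Convex ℝ (F x) ∧ (F x).Nonempty

/-- `x` is a solution of the differential inclusion `ẋ ∈ F x` on the set `I`,
staying in `X`: an absolutely continuous function whose a.e. derivative lies in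
`F (x t)`, encoded via the integral representation `x b = x a + ∫_a^b v`. -/
def IsSolOn (F : E → Set E) (X : Set E) (x : ℝ → E) (I : Set ℝ) : Prop :=
  (∀ t ∈ I, x t ∈ X) ∧
  ∃ v : ℝ → E,
    (∀ a ∈ I, ∀ b ∈ I, IntervalIntegrable v volume a b) ∧
    (∀ᵐ t ∂volume, t ∈ I → v t ∈ F (x t)) ∧
    (∀ a ∈ I, ∀ b ∈ I, x b = x a + ∫ t in a..b, v t)

/-- The solution multiflow `Φ(T,a)` of `ẋ ∈ F x` in `X`. -/
def mflow (F : E → Set E) (X : Set E) (T : ℝ) (a : E) : Set E :=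
  {b | ∃ x : ℝ → E, IsSolOn F X x (Icc 0 T) ∧ x 0 = a ∧ x T = b}

/-- `Φ(I,U)`. -/
def mflowSet (F : E → Set E) (X : Set E) (I : Set ℝ) (U : Set E) : Set E :=
  ⋃ t ∈ I, ⋃ a ∈ U, mflow F X t a

/-- Maximal invariant subset of `U`: points admitting a full-time orbit in `U`. -/
def maxInv (F : E → Set E) (U : Set E) : Set E :=
  {x | ∃ ψ : ℝ → E, IsSolOn F U ψ univ ∧ ψ 0 = x}

/-- `S` is invariant: every point of `S` has a full-time orbit staying in `S`. -/
def IsInvSet (F : E → Set E) (S : Set E) : Prop := S ⊆ maxInv F S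

/-- The restricted omega-limit set `ω_S(U)` (with `Φ^S = mflow F S`). -/
def omegaS (F : E → Set E) (S U : Set E) : Set E :=
  ⋂ t ∈ Ici (0:ℝ), closure (mflowSet F S (Ici t) U)

/-- `(Φ^S)^*(I,U)` for the dual (backward-time) multiflow. -/
def mflowDualSet (F : E → Set E) (S : Set E) (I : Set ℝ) (U : Set E) : Set E :=
  ⋃ t ∈ I, ⋃ a ∈ U, {b | a ∈ mflow F S (-t) b}

/-- The restricted alpha-limit set `α_S(U)`. -/
def alphaS (F : E → Set E) (S U : Set E) : Set E :=
  ⋂ t ∈ Iio (0:ℝ), closure (mflowDualSet F S (Iic t) U)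

/-- The interior of `U` relative to `X`. -/
def relInt (X U : Set E) : Set E := {x ∈ X | U ∈ nhdsWithin x X}

/-- The closure of `U` relative to `X`. -/
def relCl (X U : Set E) : Set E := closure U ∩ X

/-- `A` is an attractor in `S`: the `ω_S`-limit set of a neighborhood of itself in `S`. -/
def IsAttractorIn (F : E → Set E) (S A : Set E) : Prop :=
  A ⊆ S ∧ ∃ U, A ⊆ relInt S U ∧ U ⊆ S ∧ omegaS F S U = A

/-- `R` is a repeller in `S`: the `α_S`-limit set of a neighborhood of itself in `S`. -/
def IsRepellerIn (F : E → Set E) (S R : Set E) : Prop :=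
  R ⊆ S ∧ ∃ U, R ⊆ relInt S U ∧ U ⊆ S ∧ alphaS F S U = R

/-- The dual repeller of an attractor `A` in `S`. -/
def dualRep (F : E → Set E) (S A : Set E) : Set E :=
  {x ∈ S | ¬ omegaS F S {x} ⊆ A}

/-- The dual attractor of a repeller `R` in `S`. -/
def dualAtt (F : E → Set E) (S R : Set E) : Set E :=
  {x ∈ S | ¬ alphaS F S {x} ⊆ R}

-- Auxiliary lemmas --

set_option linter.unusedSectionVars false

open NNReal

theorem IsSolOn.mono {F : E → Set E} {X : Set E} {x : ℝ → E} {I J : Set ℝ}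
    (h : IsSolOn F X x I) (hJ : J ⊆ I) : IsSolOn F X x J := by
  obtain ⟨hmem, v, hint, hae, heq⟩ := h
  exact ⟨fun t ht => hmem t (hJ ht), v, fun a ha b hb => hint a (hJ ha) b (hJ hb),
    hae.mono (fun t ht hJt => ht (hJ hJt)), fun a ha b hb => heq a (hJ ha) b (hJ hb)⟩

theorem IsSolOn.shift {F : E → Set E} {X : Set E} {x : ℝ → E} {I : Set ℝ} (c : ℝ)
    (h : IsSolOn F X x I) : IsSolOn F X (fun t => x (t + c)) {t | t + c ∈ I} := by
  obtain ⟨hmem, v, hint, hae, heq⟩ := h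
  refine ⟨fun t ht => hmem _ ht, fun t => v (t + c), ?_, ?_, ?_⟩
  · intro a ha b hb
    have := (hint _ ha _ hb).comp_add_right c
    simpa using this
  · have := (measurePreserving_add_right volume c).quasiMeasurePreserving.ae hae
    exact this
  · intro a ha b hb
    have := heq _ ha _ hb
    rw [intervalIntegral.integral_comp_add_right (fun t => v t) c]
    exact this

theorem mflow_split {F : E → Set E} {S : Set E} {s r : ℝ} (hr0 : 0 ≤ r) (hrs : r ≤ s)
    {a b : E} (hb : b ∈ mflow F S s a) :
    ∃ z, z ∈ mflow F S r a ∧ b ∈ mflow F S (s - r) z := by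
  obtain ⟨x, hx, h0, hs⟩ := hb
  refine ⟨x r, ⟨x, hx.mono (Icc_subset_Icc le_rfl hrs), h0, rfl⟩,
    ⟨fun t => x (t + r), (hx.shift r).mono ?_, by simp, by simp [sub_add_cancel, hs]⟩⟩
  intro t ht
  simp only [mem_setOf_eq, mem_Icc] at *
  constructor <;> [linarith [ht.1]; linarith [ht.2]]

theorem mflow_subset {F : E → Set E} {S : Set E} {t : ℝ} (ht : 0 ≤ t) (a : E) :
    mflow F S t a ⊆ S := by
  rintro b ⟨x, hx, _, hT⟩
  exact hT ▸ hx.1 t ⟨ht, le_rfl⟩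

theorem mflow_start_mem {F : E → Set E} {S : Set E} {t : ℝ} (ht : 0 ≤ t) {a b : E}
    (h : b ∈ mflow F S t a) : a ∈ S := by
  obtain ⟨x, hx, h0, _⟩ := h
  exact h0 ▸ hx.1 0 ⟨le_rfl, ht⟩

theorem mflow_zero_mem {F : E → Set E} {S : Set E} {a : E} (ha : a ∈ S) :
    a ∈ mflow F S 0 a := by
  refine ⟨fun _ => a, ⟨fun t _ => ha, fun _ => 0, ?_, ?_, ?_⟩, rfl, rfl⟩
  · intro a' _ b' _; exact intervalIntegrable_const
  · have : (volume (Icc (0:ℝ) 0)) = 0 := by simp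
    filter_upwards [measure_eq_zero_iff_ae_notMem.mp this] with t ht ht2
    exact absurd ht2 ht
  · intro a' ha' b' hb'
    simp only [Icc_self, mem_singleton_iff] at ha' hb'
    subst ha'; subst hb'
    simp

theorem exists_bound {n : ℕ} {X : Set (Fin n → ℝ)} (hX : IsCompact X)
    {F : (Fin n → ℝ) → Set (Fin n → ℝ)} (hF : FilippovOn F X) :
    ∃ M : ℝ, 0 < M ∧ ∀ p ∈ X, ∀ w ∈ F p, ‖w‖ ≤ M := by
  have hdata : ∀ p : Fin n → ℝ, p ∈ X → ∃ Rδ : ℝ × ℝ, 0 < Rδ.2 ∧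
      (∀ y ∈ X, dist y p < Rδ.2 → ∀ w ∈ F y, ‖w‖ ≤ Rδ.1) := by
    intro p hp
    obtain ⟨R, hR⟩ := ((hF.2 p hp).1.isBounded).subset_ball 0
    obtain ⟨δ, hδ, hδ2⟩ := hF.1 p hp 1 one_pos
    refine ⟨(R + 1, δ), hδ, ?_⟩
    intro y hy hdist w hw
    obtain ⟨w', hw', hd⟩ := hδ2 y hy hdist hw
    have h1 : ‖w'‖ < R := by simpa [Metric.mem_ball, dist_zero_right] using hR hw'
    have h2 : ‖w‖ ≤ ‖w'‖ + dist w w' := by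
      rw [dist_eq_norm]
      calc ‖w‖ = ‖w' + (w - w')‖ := by ring_nf
      _ ≤ ‖w'‖ + ‖w - w'‖ := norm_add_le _ _
    simp only [Prod.fst, Prod.snd] at hdist ⊢
    linarith
  choose! Rδ hpos hbd using hdata
  obtain ⟨t, ht⟩ := hX.elim_finite_subcover (fun p : ↥X => Metric.ball p.1 (Rδ p.1).2)
    (fun _ => Metric.isOpen_ball) (by
      intro x hx
      exact mem_iUnion.mpr ⟨⟨x, hx⟩, by simpa [Metric.mem_ball] using hpos x hx⟩)
  refine ⟨1 + ∑ i ∈ t, |(Rδ i.1).1|, by positivity, ?_⟩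
  intro p hp w hw
  have hmem := ht hp
  rw [mem_iUnion₂] at hmem
  obtain ⟨i, hi, hpi⟩ := hmem
  have := hbd i.1 i.2 p hp (by simpa [Metric.mem_ball] using hpi) w hw
  have h3 : (Rδ i.1).1 ≤ ∑ j ∈ t, |(Rδ j.1).1| :=
    le_trans (le_abs_self _) (Finset.single_le_sum (f := fun j => |(Rδ j.1).1|) (fun j _ => abs_nonneg _) hi)
  linarith

theorem sol_dist_le {F : E → Set E} {S : Set E} {x : ℝ → E} {v : ℝ → E} {m M : ℝ}
    (hmem : ∀ t ∈ Icc 0 m, x t ∈ S)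
    (hae : ∀ᵐ t ∂volume, t ∈ Icc 0 m → v t ∈ F (x t))
    (heq : ∀ a ∈ Icc 0 m, ∀ b ∈ Icc 0 m, x b = x a + ∫ t in a..b, v t)
    (hM : ∀ p ∈ S, ∀ w ∈ F p, ‖w‖ ≤ M) :
    ∀ a ∈ Icc 0 m, ∀ b ∈ Icc 0 m, ‖x b - x a‖ ≤ M * |b - a| := by
  intro a ha b hb
  have hsub : Set.uIoc a b ⊆ Icc 0 m := by
    intro t ht
    rcases ht with ⟨h1, h2⟩
    constructor
    · exact le_of_lt (lt_of_le_of_lt (le_min ha.1 hb.1) h1)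
    · exact le_trans h2 (max_le ha.2 hb.2)
  have : x b - x a = ∫ t in a..b, v t := by rw [heq a ha b hb]; abel
  rw [this]
  refine intervalIntegral.norm_integral_le_of_norm_le_const_ae ?_
  filter_upwards [hae] with t htv
  intro ht
  exact hM _ (hmem t (hsub ht)) _ (htv (hsub ht))

theorem lipschitz_deriv_norm_le {n : ℕ} {y : ℝ → (Fin n → ℝ)} {M : ℝ≥0}
    (hy : LipschitzWith M y) (s : ℝ) : ‖deriv y s‖ ≤ M := by
  by_cases h : DifferentiableAt ℝ y s
  · have hfd := h.hasDerivAt.hasFDerivAt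
    have := hfd.le_of_lipschitz hy
    rw [ContinuousLinearMap.norm_toSpanSingleton] at this
    exact this
  · rw [deriv_zero_of_not_differentiableAt h]
    simpa using M.coe_nonneg

theorem lipschitz_ftc {n : ℕ} {y : ℝ → (Fin n → ℝ)} {M : ℝ≥0}
    (hy : LipschitzWith M y) {a b : ℝ} (hab : a ≤ b) :
    y b = y a + ∫ t in a..b, deriv y t := by
  have ycont : Continuous y := hy.continuous
  have ynorm : ∀ s t : ℝ, ‖y t - y s‖ ≤ M * |t - s| := by
    intro s t
    have := hy.dist_le_mul t s
    rwa [dist_eq_norm, Real.dist_eq] at this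
  have hdiff : ∀ᵐ s : ℝ ∂volume, DifferentiableAt ℝ y s := hy.ae_differentiableAt
  set g : ℕ → ℝ → (Fin n → ℝ) := fun j s => ((j : ℝ) + 1) • (y (s + ((j:ℝ)+1)⁻¹) - y s) with hg
  have hpos : ∀ j : ℕ, (0:ℝ) < ((j:ℝ)+1)⁻¹ := fun j => by positivity
  have hinv : ∀ j : ℕ, ((j:ℝ)+1) * ((j:ℝ)+1)⁻¹ = 1 := fun j => by
    field_simp
  -- claim 2 : endpoint averages converge
  have claim2 : ∀ c : ℝ, Tendsto (fun j : ℕ => ((j:ℝ)+1) • ∫ s in c..(c + ((j:ℝ)+1)⁻¹), y s)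
      atTop (𝓝 (y c)) := by
    intro c
    rw [tendsto_iff_norm_sub_tendsto_zero]
    have key : ∀ j : ℕ, ‖((j:ℝ)+1) • (∫ s in c..(c + ((j:ℝ)+1)⁻¹), y s) - y c‖ ≤ M * ((j:ℝ)+1)⁻¹ := by
      intro j
      set h : ℝ := ((j:ℝ)+1)⁻¹ with hh
      have h0 : (0:ℝ) < h := hpos j
      have e1 : ∫ s in c..(c + h), (y c) = h • y c := by
        rw [intervalIntegral.integral_const]; congr 1; ring
      have e2 : (∫ s in c..(c + h), y s) - h • y c = ∫ s in c..(c + h), (y s - y c) := by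
        rw [intervalIntegral.integral_sub (ycont.intervalIntegrable _ _)
          (intervalIntegrable_const), e1]
      have e3 : ((j:ℝ)+1) • (∫ s in c..(c + h), y s) - y c
          = ((j:ℝ)+1) • ((∫ s in c..(c + h), y s) - h • y c) := by
        rw [smul_sub, smul_smul, hinv j, one_smul]
      rw [e3, e2, norm_smul]
      have e4 : ‖∫ s in c..(c + h), (y s - y c)‖ ≤ (M * h) * |c + h - c| := by
        apply intervalIntegral.norm_integral_le_of_norm_le_const
        intro s hs
        rcases hs with ⟨hs1, hs2⟩
        have hmin : min c (c+h) = c := by simp [le_of_lt h0]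
        have hmax : max c (c+h) = c + h := by simp [le_of_lt h0]
        rw [hmin] at hs1; rw [hmax] at hs2
        have : |s - c| ≤ h := by rw [abs_le]; constructor <;> linarith
        calc ‖y s - y c‖ ≤ M * |s - c| := ynorm c s
        _ ≤ M * h := by nlinarith [M.coe_nonneg, abs_nonneg (s - c)]
      have e5 : |c + h - c| = h := by rw [show c + h - c = h by ring, abs_of_pos h0]
      rw [e5] at e4
      calc ‖((j:ℝ)+1)‖ * ‖∫ s in c..(c + h), (y s - y c)‖
          ≤ ((j:ℝ)+1) * ((M * h) * h) := by
            rw [Real.norm_eq_abs, abs_of_pos (by positivity : (0:ℝ) < (j:ℝ)+1)]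
            apply mul_le_mul_of_nonneg_left e4 (by positivity)
      _ = (((j:ℝ)+1) * h) * (M * h) := by ring
      _ = M * h := by rw [hinv j, one_mul]
    have hlim : Tendsto (fun j : ℕ => (M:ℝ) * ((j:ℝ)+1)⁻¹) atTop (𝓝 0) := by
      have := tendsto_one_div_add_atTop_nhds_zero_nat (𝕜 := ℝ)
      have h2 := this.const_mul (M:ℝ)
      simpa [one_div, mul_zero] using h2
    exact squeeze_zero_norm (fun j => by simpa using key j) hlim
  -- claim 1 : integral of g j equals difference of endpoint averages
  have claim1 : ∀ j : ℕ, ∫ s in a..b, g j s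
      = ((j:ℝ)+1) • ((∫ s in b..(b + ((j:ℝ)+1)⁻¹), y s) - ∫ s in a..(a + ((j:ℝ)+1)⁻¹), y s) := by
    intro j
    set h : ℝ := ((j:ℝ)+1)⁻¹ with hh
    have i1 : ∫ s in a..b, g j s = ((j:ℝ)+1) • ((∫ s in a..b, y (s + h)) - ∫ s in a..b, y s) := by
      rw [hg]
      rw [intervalIntegral.integral_smul]
      congr 1
      exact intervalIntegral.integral_sub ((ycont.comp (by continuity)).intervalIntegrable _ _)
        (ycont.intervalIntegrable _ _)
    have i2 : (∫ s in a..b, y (s + h)) = ∫ s in (a+h)..(b+h), y s :=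
      intervalIntegral.integral_comp_add_right y h
    have j1 : (∫ s in a..(a+h), y s) + ∫ s in (a+h)..(b+h), y s = ∫ s in a..(b+h), y s :=
      intervalIntegral.integral_add_adjacent_intervals (ycont.intervalIntegrable _ _)
        (ycont.intervalIntegrable _ _)
    have j2 : (∫ s in a..b, y s) + ∫ s in b..(b+h), y s = ∫ s in a..(b+h), y s :=
      intervalIntegral.integral_add_adjacent_intervals (ycont.intervalIntegrable _ _)
        (ycont.intervalIntegrable _ _)
    rw [i1, i2]
    congr 1
    have : (∫ s in (a+h)..(b+h), y s) = (∫ s in a..(b+h), y s) - ∫ s in a..(a+h), y s := by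
      rw [← j1]; abel
    rw [this, ← j2]; abel
  -- claim 3 : DCT
  have claim3 : Tendsto (fun j : ℕ => ∫ s in a..b, g j s) atTop (𝓝 (∫ s in a..b, deriv y s)) := by
    have hred : ∀ (f : ℝ → (Fin n → ℝ)), (∫ s in a..b, f s) = ∫ s in Ioc a b, f s ∂volume :=
      fun f => intervalIntegral.integral_of_le hab
    rw [hred]
    have : (fun j : ℕ => ∫ s in a..b, g j s) = fun j : ℕ => ∫ s in Ioc a b, g j s ∂volume := by
      funext j; exact hred (g j)
    rw [this]
    apply tendsto_integral_of_dominated_convergence (fun _ => (M:ℝ))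
    · intro j
      exact ((ycont.comp (by continuity)).sub ycont).const_smul
        ((j:ℝ)+1) |>.aestronglyMeasurable
    · exact integrableOn_const measure_Ioc_lt_top.ne
    · intro j
      filter_upwards with s
      rw [hg]
      simp only [norm_smul, Real.norm_eq_abs, abs_of_pos (by positivity : (0:ℝ) < (j:ℝ)+1)]
      calc ((j:ℝ)+1) * ‖y (s + ((j:ℝ)+1)⁻¹) - y s‖
          ≤ ((j:ℝ)+1) * ((M:ℝ) * |s + ((j:ℝ)+1)⁻¹ - s|) := by
            apply mul_le_mul_of_nonneg_left (ynorm s _) (by positivity)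
      _ = (((j:ℝ)+1) * ((j:ℝ)+1)⁻¹) * (M:ℝ) := by
            rw [show s + ((j:ℝ)+1)⁻¹ - s = ((j:ℝ)+1)⁻¹ by ring,
              abs_of_pos (hpos j)]; ring
      _ = (M:ℝ) := by rw [hinv j, one_mul]
    · have : ∀ᵐ s : ℝ ∂volume.restrict (Ioc a b), DifferentiableAt ℝ y s :=
        ae_restrict_of_ae hdiff
      filter_upwards [this] with s hs
      have hder := hs.hasDerivAt
      rw [hasDerivAt_iff_tendsto_slope] at hder
      have hseq : Tendsto (fun j : ℕ => s + ((j:ℝ)+1)⁻¹) atTop (𝓝[≠] s) := by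
        apply tendsto_nhdsWithin_of_tendsto_nhds_of_eventually_within
        · have : Tendsto (fun j : ℕ => ((j:ℝ)+1)⁻¹) atTop (𝓝 0) := by
            simpa [one_div] using tendsto_one_div_add_atTop_nhds_zero_nat (𝕜 := ℝ)
          have h2 := this.const_add s
          simpa using h2
        · filter_upwards with j
          simp only [mem_compl_iff, mem_singleton_iff]
          intro hcon
          have := hpos j
          nlinarith [add_left_cancel (a := s) (b := ((j:ℝ)+1)⁻¹) (c := 0)]
      have := hder.comp hseq
      have heq2 : ∀ j : ℕ, slope y s (s + ((j:ℝ)+1)⁻¹) = g j s := by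
        intro j
        rw [slope_def_module]
        rw [show s + ((j:ℝ)+1)⁻¹ - s = ((j:ℝ)+1)⁻¹ by ring, inv_inv, hg]
      simp only [Function.comp_def] at this
      rw [show (fun j : ℕ => slope y s (s + ((j:ℝ)+1)⁻¹)) = fun j => g j s from funext heq2] at this
      exact this
  -- combine
  have final : Tendsto (fun j : ℕ => ∫ s in a..b, g j s) atTop (𝓝 (y b - y a)) := by
    have := ((claim2 b).sub (claim2 a))
    have h2 : (fun j : ℕ => ((j:ℝ)+1) • ((∫ s in b..(b + ((j:ℝ)+1)⁻¹), y s)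
        - ∫ s in a..(a + ((j:ℝ)+1)⁻¹), y s)) = fun j : ℕ =>
        (((j:ℝ)+1) • ∫ s in b..(b + ((j:ℝ)+1)⁻¹), y s)
        - ((j:ℝ)+1) • ∫ s in a..(a + ((j:ℝ)+1)⁻¹), y s := by
      funext j; rw [smul_sub]
    rw [funext claim1, h2]
    exact this
  have := tendsto_nhds_unique claim3 final
  rw [this]; abel

theorem mflow_closed {n : ℕ} {X S : Set (Fin n → ℝ)} (hX : IsCompact X)
    {F : (Fin n → ℝ) → Set (Fin n → ℝ)} (hF : FilippovOn F X) (hSX : S ⊆ X) (hS : IsCompact S)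
    {m : ℝ} (hm : 0 ≤ m) {b c : Fin n → ℝ} {bs cs : ℕ → Fin n → ℝ}
    (hbc : ∀ k, cs k ∈ mflow F S m (bs k))
    (hb : Tendsto bs atTop (𝓝 b)) (hc : Tendsto cs atTop (𝓝 c)) :
    c ∈ mflow F S m b := by
  obtain ⟨M, hMpos, hMX⟩ := exists_bound hX hF
  have hMS : ∀ p ∈ S, ∀ w ∈ F p, ‖w‖ ≤ M := fun p hp => hMX p (hSX hp)
  choose xs hsol h0 hT using hbc
  have hmems : ∀ k, ∀ t ∈ Icc 0 m, xs k t ∈ S := fun k => (hsol k).1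
  choose vs hvint hvae hveq using fun k => (hsol k).2
  have hlip : ∀ k, ∀ a' ∈ Icc 0 m, ∀ b' ∈ Icc 0 m, ‖xs k b' - xs k a'‖ ≤ M * |b' - a'| :=
    fun k => sol_dist_le (hmems k) (hvae k) (hveq k) hMS
  -- the clamp function
  set clamp : ℝ → ℝ := fun t => max 0 (min t m) with hclamp
  have hclamp_mem : ∀ t, clamp t ∈ Icc 0 m :=
    fun t => ⟨le_max_left _ _, max_le hm (min_le_right t m)⟩
  have hclamp_id : ∀ t ∈ Icc 0 m, clamp t = t := by
    intro t ht
    simp only [hclamp]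
    rw [min_eq_left ht.2, max_eq_right ht.1]
  have hclamp_lip : ∀ s t : ℝ, |clamp t - clamp s| ≤ |t - s| := by
    intro s t
    simp only [hclamp]
    have h1 : |max 0 (min t m) - max 0 (min s m)| ≤ |min t m - min s m| := by
      rw [max_comm 0 (min t m), max_comm 0 (min s m)]
      exact abs_max_sub_max_le_abs _ _ _
    have h2 : |min t m - min s m| ≤ |t - s| := by
      have := abs_min_sub_min_le_max t m s m
      simpa using this
    linarith
  set ys : ℕ → ℝ → (Fin n → ℝ) := fun k t => xs k (clamp t) with hys
  have hys_mem : ∀ k t, ys k t ∈ S := fun k t => hmems k _ (hclamp_mem t)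
  have hys_lip : ∀ k (s t : ℝ), ‖ys k t - ys k s‖ ≤ M * |t - s| := by
    intro k s t
    calc ‖ys k t - ys k s‖ ≤ M * |clamp t - clamp s| :=
          hlip k _ (hclamp_mem s) _ (hclamp_mem t)
    _ ≤ M * |t - s| := mul_le_mul_of_nonneg_left (hclamp_lip s t) hMpos.le
  -- ultrafilter limit
  set 𝒰 : Ultrafilter ℕ := hyperfilter ℕ with hU
  have hUatTop : ↑𝒰 ≤ (atTop : Filter ℕ) := by
    rw [← Nat.cofinite_eq_atTop]; exact hyperfilter_le_cofinite
  have hylim : ∀ t : ℝ, ∃ p ∈ S, Tendsto (fun k => ys k t) 𝒰 (𝓝 p) := by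
    intro t
    obtain ⟨p, hp, hle⟩ := hS.ultrafilter_le_nhds (𝒰.map (fun k => ys k t))
      (by rw [Ultrafilter.coe_map, le_principal_iff]
          exact Filter.mem_map.mpr (univ_mem' (fun k => hys_mem k t)))
    refine ⟨p, hp, ?_⟩
    rwa [Ultrafilter.coe_map] at hle
  choose y hyS hytend using hylim
  -- identification of endpoints
  have hy_eq : ∀ t ∈ Icc 0 m, ∀ k, ys k t = xs k t := by
    intro t ht k; simp only [hys]; rw [hclamp_id t ht]
  have hy0 : y 0 = b := by
    refine tendsto_nhds_unique (hytend 0) ?_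
    have : (fun k => ys k 0) = bs := by
      funext k; rw [hy_eq 0 ⟨le_rfl, hm⟩ k, h0]
    rw [this]
    exact hb.mono_left hUatTop
  have hym : y m = c := by
    refine tendsto_nhds_unique (hytend m) ?_
    have : (fun k => ys k m) = cs := by
      funext k; rw [hy_eq m ⟨hm, le_rfl⟩ k, hT]
    rw [this]
    exact hc.mono_left hUatTop
  -- Lipschitz bound for y
  have hylip : ∀ s t : ℝ, ‖y t - y s‖ ≤ M * |t - s| := by
    intro s t
    have h1 : Tendsto (fun k => ‖ys k t - ys k s‖) 𝒰 (𝓝 ‖y t - y s‖) :=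
      ((hytend t).sub (hytend s)).norm
    exact le_of_tendsto h1 (Eventually.of_forall (fun k => hys_lip k s t))
  set MN : ℝ≥0 := ⟨M, hMpos.le⟩ with hMN
  have ylipW : LipschitzWith MN y := by
    apply LipschitzWith.of_dist_le_mul
    intro s t
    rw [dist_eq_norm, Real.dist_eq]
    exact hylip t s
  set v : ℝ → (Fin n → ℝ) := deriv y with hv
  have vnorm : ∀ s, ‖v s‖ ≤ M := fun s => lipschitz_deriv_norm_le ylipW s
  have vint : ∀ a' b' : ℝ, IntervalIntegrable v volume a' b' := by
    intro a' b'
    rw [intervalIntegrable_iff]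
    refine Integrable.mono' (g := fun _ => M) ?_ ((measurable_deriv y).aestronglyMeasurable) ?_
    · exact integrableOn_const (by rw [Set.uIoc]; exact measure_Ioc_lt_top.ne)
    · exact Eventually.of_forall vnorm
  have hinteq : ∀ a' b' : ℝ, y b' = y a' + ∫ t in a'..b', v t := by
    intro a' b'
    rcases le_total a' b' with h | h
    · exact lipschitz_ftc ylipW h
    · have := lipschitz_ftc ylipW h
      rw [intervalIntegral.integral_symm]
      rw [this]; abel
  -- the a.e. differential inclusion
  have haein : ∀ᵐ t ∂(volume : Measure ℝ), t ∈ Icc 0 m → v t ∈ F (y t) := by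
    have hGk : ∀ᵐ s : ℝ ∂volume, ∀ k, s ∈ Icc 0 m → vs k s ∈ F (xs k s) := ae_all_iff.mpr hvae
    have hne : ∀ᵐ s : ℝ ∂volume, s ≠ m := by
      have : (volume ({m} : Set ℝ)) = 0 := Real.volume_singleton
      filter_upwards [measure_eq_zero_iff_ae_notMem.mp this] with s hs
      simpa using hs
    filter_upwards [hGk, hne, ylipW.ae_differentiableAt] with t hvk htm hdiff htIcc
    have htlt : t < m := lt_of_le_of_ne htIcc.2 htm
    have hytS : y t ∈ S := hyS t
    obtain ⟨Kcpt, Kcvx, -⟩ := hF.2 (y t) (hSX hytS)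
    -- main epsilon claim
    have hcth : ∀ ε > (0:ℝ), v t ∈ Metric.cthickening ε (F (y t)) := by
      intro ε hε
      obtain ⟨δ, hδpos, hδ⟩ := hF.1 (y t) (hSX hytS) ε hε
      have hCcl : IsClosed (Metric.cthickening ε (F (y t))) := Metric.isClosed_cthickening
      have hCcx : Convex ℝ (Metric.cthickening ε (F (y t))) := Kcvx.cthickening ε
      -- step 1: difference quotients with admissible h lie in the cthickening
      have step1 : ∀ h : ℝ, 0 < h → t + h ≤ m → h < δ / (2 * M) →
          h⁻¹ • (y (t + h) - y t) ∈ Metric.cthickening ε (F (y t)) := by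
        intro h hh0 hhm hhδ
        have hIcc_t : t ∈ Icc 0 m := htIcc
        have hIcc_th : t + h ∈ Icc 0 m := ⟨by linarith [htIcc.1], hhm⟩
        have hxtend : ∀ t' ∈ Icc 0 m, Tendsto (fun k => xs k t') 𝒰 (𝓝 (y t')) := by
          intro t' ht'
          have h1 := hytend t'
          have he : (fun k => ys k t') = fun k => xs k t' := funext (fun k => hy_eq t' ht' k)
          rwa [he] at h1
        have hball : ∀ᶠ k in (𝒰 : Filter ℕ), dist (xs k t) (y t) < δ / 2 :=
          Metric.tendsto_nhds.mp (hxtend t hIcc_t) (δ/2) (by linarith)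
        have hev : ∀ᶠ k in (𝒰 : Filter ℕ),
            h⁻¹ • (xs k (t + h) - xs k t) ∈ Metric.cthickening ε (F (y t)) := by
          filter_upwards [hball] with k hk
          have hMh : M * h < δ / 2 := by
            have := (lt_div_iff₀ (by positivity : (0:ℝ) < 2 * M)).mp hhδ
            nlinarith
          have hclose : ∀ s ∈ Icc t (t + h), dist (xs k s) (y t) < δ := by
            intro s hs
            have hsIcc : s ∈ Icc 0 m := ⟨le_trans htIcc.1 hs.1, le_trans hs.2 hhm⟩
            have h1 : ‖xs k s - xs k t‖ ≤ M * |s - t| := hlip k t hIcc_t s hsIcc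
            have h2 : |s - t| ≤ h := by
              rw [abs_le]; constructor
              · linarith [hs.1]
              · linarith [hs.2]
            have h3 : dist (xs k s) (xs k t) ≤ M * h := by
              rw [dist_eq_norm]
              calc ‖xs k s - xs k t‖ ≤ M * |s - t| := h1
              _ ≤ M * h := mul_le_mul_of_nonneg_left h2 hMpos.le
            calc dist (xs k s) (y t) ≤ dist (xs k s) (xs k t) + dist (xs k t) (y t) :=
                dist_triangle _ _ _
            _ < δ := by linarith
          have haes : ∀ᵐ s ∂(volume.restrict (Ioc t (t+h))),
              vs k s ∈ Metric.cthickening ε (F (y t)) := by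
            filter_upwards [ae_restrict_of_ae (hvae k), ae_restrict_mem measurableSet_Ioc]
              with s hsv hsmem
            have hsIcc : s ∈ Icc 0 m := ⟨le_trans htIcc.1 (le_of_lt hsmem.1),
              le_trans hsmem.2 hhm⟩
            have hvF : vs k s ∈ F (xs k s) := hsv hsIcc
            have hsubF : F (xs k s) ⊆ {z | ∃ w ∈ F (y t), dist z w < ε} :=
              hδ (xs k s) (hSX (hmems k s hsIcc))
                (hclose s (Ioc_subset_Icc_self hsmem))
            obtain ⟨w, hw, hdw⟩ := hsubF hvF
            exact Metric.thickening_subset_cthickening ε _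
              (Metric.mem_thickening_iff.mpr ⟨w, hw, hdw⟩)
          have hxeq : xs k (t+h) - xs k t = ∫ s in t..(t+h), vs k s := by
            rw [hveq k t hIcc_t (t+h) hIcc_th]; abel
          have hintk : IntegrableOn (vs k) (Ioc t (t+h)) volume :=
            (hvint k t hIcc_t (t+h) hIcc_th).1
          set μ : Measure ℝ := (ENNReal.ofReal h)⁻¹ • volume.restrict (Ioc t (t+h)) with hμdef
          have hofr0 : (ENNReal.ofReal h) ≠ 0 := (ENNReal.ofReal_pos.mpr hh0).ne'
          haveI : IsProbabilityMeasure μ := by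
            constructor
            rw [hμdef, Measure.smul_apply, Measure.restrict_apply MeasurableSet.univ,
              univ_inter, Real.volume_Ioc, show t + h - t = h by ring, smul_eq_mul,
              ENNReal.inv_mul_cancel hofr0 ENNReal.ofReal_ne_top]
          have havg : (∫ s, vs k s ∂μ) ∈ Metric.cthickening ε (F (y t)) := by
            refine hCcx.integral_mem hCcl ?_ ?_
            · exact Measure.ae_smul_measure haes _
            · exact hintk.smul_measure (by simp [hofr0])
          have hival : (∫ s, vs k s ∂μ) = h⁻¹ • (xs k (t+h) - xs k t) := by
            rw [hμdef, integral_smul_measure, hxeq,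
              intervalIntegral.integral_of_le (by linarith : t ≤ t + h)]
            congr 1
            rw [ENNReal.toReal_inv, ENNReal.toReal_ofReal hh0.le]
          rwa [hival] at havg
        have hlim : Tendsto (fun k => h⁻¹ • (xs k (t+h) - xs k t)) 𝒰
            (𝓝 (h⁻¹ • (y (t+h) - y t))) :=
          (((hxtend (t+h) hIcc_th).sub (hxtend t hIcc_t)).const_smul _)
        exact hCcl.mem_of_tendsto hlim hev
      -- step 2: pass to the limit h → 0
      set r : ℝ := min (δ / (4 * M)) (m - t) with hrdef
      have hrpos : 0 < r := lt_min (by positivity) (by linarith)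
      set hj : ℕ → ℝ := fun j => r / ((j:ℝ)+1) with hhj
      have hjpos : ∀ j : ℕ, 0 < hj j := fun j => by positivity
      have hjle : ∀ j : ℕ, hj j ≤ r := by
        intro j
        rw [hhj]
        calc r / ((j:ℝ)+1) ≤ r / 1 := by
              apply div_le_div_of_nonneg_left hrpos.le one_pos
              simp
        _ = r := div_one r
      have hjm : ∀ j : ℕ, t + hj j ≤ m := by
        intro j
        have h1 : hj j ≤ m - t := le_trans (hjle j) (min_le_right _ _)
        linarith
      have hjδ : ∀ j : ℕ, hj j < δ / (2 * M) := by
        intro j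
        have h1 : hj j ≤ δ / (4*M) := le_trans (hjle j) (min_le_left _ _)
        have h2 : δ / (4*M) < δ / (2*M) := by
          apply div_lt_div_of_pos_left hδpos (by positivity)
          nlinarith
        linarith
      have hmemj : ∀ j : ℕ, (hj j)⁻¹ • (y (t + hj j) - y t) ∈
          Metric.cthickening ε (F (y t)) := fun j => step1 _ (hjpos j) (hjm j) (hjδ j)
      have hder := hdiff.hasDerivAt
      rw [hasDerivAt_iff_tendsto_slope] at hder
      have hj0 : Tendsto hj atTop (𝓝 0) := by
        rw [hhj]
        have h1 : Tendsto (fun j : ℕ => ((j:ℝ)+1)⁻¹) atTop (𝓝 0) := by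
          simpa [one_div] using tendsto_one_div_add_atTop_nhds_zero_nat (𝕜 := ℝ)
        have h2 := h1.const_mul r
        simpa [div_eq_mul_inv, mul_zero] using h2
      have hseq : Tendsto (fun j : ℕ => t + hj j) atTop (𝓝[≠] t) := by
        apply tendsto_nhdsWithin_of_tendsto_nhds_of_eventually_within
        · have h2 := hj0.const_add t
          simpa using h2
        · filter_upwards with j
          simp only [mem_compl_iff, mem_singleton_iff]
          intro hcon
          have h3 := hjpos j
          have : hj j = 0 := by linarith [congrArg (fun z => z - t) hcon]
          linarith
      have hcomp := hder.comp hseq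
      have heq2 : ∀ j : ℕ, slope y t (t + hj j) = (hj j)⁻¹ • (y (t + hj j) - y t) := by
        intro j
        rw [slope_def_module]
        congr 2
        ring
      have hfin : Tendsto (fun j : ℕ => (hj j)⁻¹ • (y (t + hj j) - y t)) atTop
          (𝓝 (deriv y t)) := by
        simp only [Function.comp_def] at hcomp
        rwa [show (fun j : ℕ => slope y t (t + hj j))
          = fun j : ℕ => (hj j)⁻¹ • (y (t + hj j) - y t) from funext heq2] at hcomp
      exact hCcl.mem_of_tendsto hfin (Eventually.of_forall hmemj)
    -- conclude: v t ∈ F (y t)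
    have hKcl : IsClosed (F (y t)) := Kcpt.isClosed
    rw [Metric.mem_of_closed' hKcl]
    intro ε hε
    have h1 := hcth (ε/2) (by linarith)
    have h2 : Metric.cthickening (ε/2) (F (y t)) ⊆ Metric.thickening ε (F (y t)) :=
      Metric.cthickening_subset_thickening' hε (by linarith) _
    obtain ⟨w, hw, hdw⟩ := Metric.mem_thickening_iff.mp (h2 h1)
    exact ⟨w, hw, hdw⟩
  exact ⟨y, ⟨fun t _ => hyS t, v, fun a' _ b' _ => vint a' b', haein,
    fun a' _ b' _ => hinteq a' b'⟩, hy0, hym⟩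


theorem mem_mflowSet_iff {F : E → Set E} {S : Set E} {I : Set ℝ} {U : Set E} {z : E} :
    z ∈ mflowSet F S I U ↔ ∃ t ∈ I, ∃ a ∈ U, z ∈ mflow F S t a := by
  simp [mflowSet, mem_iUnion]

theorem mflowSet_subset_S {F : E → Set E} {S : Set E} {t : ℝ} (ht : 0 ≤ t) (U : Set E) :
    mflowSet F S (Ici t) U ⊆ S := by
  intro z hz
  obtain ⟨s, hs, a, _, hmem⟩ := mem_mflowSet_iff.mp hz
  exact mflow_subset (le_trans ht hs) a hmem

theorem mflowSet_mono_left {F : E → Set E} {S : Set E} {I J : Set ℝ} {U : Set E}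
    (h : I ⊆ J) : mflowSet F S I U ⊆ mflowSet F S J U := by
  intro z hz
  obtain ⟨t, ht, a, ha, hmem⟩ := mem_mflowSet_iff.mp hz
  exact mem_mflowSet_iff.mpr ⟨t, h ht, a, ha, hmem⟩

theorem mflowSet_mono_right {F : E → Set E} {S : Set E} {I : Set ℝ} {U V : Set E}
    (h : U ⊆ V) : mflowSet F S I U ⊆ mflowSet F S I V := by
  intro z hz
  obtain ⟨t, ht, a, ha, hmem⟩ := mem_mflowSet_iff.mp hz
  exact mem_mflowSet_iff.mpr ⟨t, ht, a, h ha, hmem⟩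

theorem omegaS_mono {F : E → Set E} {S U V : Set E} (h : U ⊆ V) :
    omegaS F S U ⊆ omegaS F S V := by
  intro z hz
  rw [omegaS] at hz ⊢
  rw [mem_iInter₂] at hz ⊢
  intro t ht
  exact closure_mono (mflowSet_mono_right h) (hz t ht)

theorem alphaS_subset_S {F : E → Set E} {S : Set E} (hScl : IsClosed S) (U : Set E) :
    alphaS F S U ⊆ S := by
  intro z hz
  rw [alphaS, mem_iInter₂] at hz
  have h1 := hz (-1) (by norm_num)
  refine (IsClosed.closure_subset_iff hScl).mpr ?_ h1
  intro w hw
  rw [mflowDualSet] at hw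
  simp only [mem_iUnion, mem_setOf_eq] at hw
  obtain ⟨s, hs, a, _, hmem⟩ := hw
  have hspos : (0:ℝ) ≤ -s := by
    simp only [mem_Iic] at hs
    linarith
  exact mflow_start_mem hspos hmem

theorem absorb {n : ℕ} {S : Set (Fin n → ℝ)} {F : (Fin n → ℝ) → Set (Fin n → ℝ)}
    (hS : IsCompact S) {W : Set (Fin n → ℝ)} {G : Set (Fin n → ℝ)} (hG : IsOpen G)
    (hsub : omegaS F S W ⊆ G) : ∃ T : ℝ, 0 ≤ T ∧ mflowSet F S (Ici T) W ⊆ G := by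
  set K : ℕ → Set (Fin n → ℝ) := fun j => closure (mflowSet F S (Ici (j:ℝ)) W) with hK
  have hKS : ∀ j, K j ⊆ S := fun j =>
    (IsClosed.closure_subset_iff hS.isClosed).mpr (mflowSet_subset_S (Nat.cast_nonneg j) W)
  have hKcl : ∀ j, IsClosed (K j) := fun j => isClosed_closure
  have hKcpt : ∀ j, IsCompact (K j) := fun j => hS.of_isClosed_subset (hKcl j) (hKS j)
  have hKmono : ∀ i j : ℕ, i ≤ j → K j ⊆ K i := by
    intro i j hij
    exact closure_mono (mflowSet_mono_left (fun t ht => mem_Ici.mpr (le_trans (Nat.cast_le.mpr hij) (mem_Ici.mp ht))))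
  have hdir : Directed (· ⊇ ·) K := fun i j =>
    ⟨max i j, hKmono i _ (le_max_left i j), hKmono j _ (le_max_right i j)⟩
  have hint : (⋂ j, K j) ⊆ omegaS F S W := by
    intro z hz
    rw [omegaS, mem_iInter₂]
    intro t ht
    have h1 : K ⌈t⌉₊ ⊆ closure (mflowSet F S (Ici t) W) :=
      closure_mono (mflowSet_mono_left (fun s hs => mem_Ici.mpr (le_trans (Nat.le_ceil t) (mem_Ici.mp hs))))
    exact h1 (mem_iInter.mp hz ⌈t⌉₊)
  obtain ⟨j, hj⟩ := exists_subset_nhds_of_isCompact' hdir hKcpt hKcl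
    (fun x hx => hG.mem_nhds (hsub (hint hx)))
  exact ⟨j, Nat.cast_nonneg j, subset_trans subset_closure hj⟩

end DIncl


open DIncl Set MeasureTheory Filter Topology


/-- An attractor is the dual attractor of its dual repeller. -/
theorem attractor_eq_dualAtt_dualRep {n : ℕ} (X : Set (Fin n → ℝ)) (hX : IsCompact X)
    (F : (Fin n → ℝ) → Set (Fin n → ℝ)) (hF : FilippovOn F X)
    (S : Set (Fin n → ℝ)) (hSX : S ⊆ X) (hS : IsCompact S) (hSinv : IsInvSet F S)
    (A : Set (Fin n → ℝ)) (hA : IsAttractorIn F S A) :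
    A = dualAtt F S (dualRep F S A) := by
  obtain ⟨hAS, U, hAint, hUS, hAomega⟩ := hA
  have hAcl : IsClosed A := by
    rw [← hAomega, omegaS]
    exact isClosed_biInter (fun t ht => isClosed_closure)
  have hAcpt : IsCompact A := hS.of_isClosed_subset hAcl hAS
  -- an open set O with A ⊆ O and O ∩ S ⊆ U
  obtain ⟨O, hOopen, hAO, hOS⟩ : ∃ O : Set (Fin n → ℝ), IsOpen O ∧ A ⊆ O ∧ O ∩ S ⊆ U := by
    have hch : ∀ a : ↥A, ∃ O : Set (Fin n → ℝ), IsOpen O ∧ (a : Fin n → ℝ) ∈ O ∧ O ∩ S ⊆ U :=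
      fun a => mem_nhdsWithin.mp (hAint a.2).2
    choose Oa h1 h2 h3 using hch
    refine ⟨⋃ a : ↥A, Oa a, isOpen_iUnion h1, ?_, ?_⟩
    · intro z hz
      exact mem_iUnion.mpr ⟨⟨z, hz⟩, h2 ⟨z, hz⟩⟩
    · rintro z ⟨hz1, hz2⟩
      obtain ⟨a, ha⟩ := mem_iUnion.mp hz1
      exact h3 a ⟨ha, hz2⟩
  -- a smaller open set O' with A ⊆ O' and closure O' ⊆ O
  obtain ⟨O', hO'open, hAO', hO'cl⟩ := normal_exists_closure_subset hAcl hOopen hAO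
  have hcpt : IsCompact (closure O' ∩ S) :=
    hS.of_isClosed_subset (isClosed_closure.inter hS.isClosed) inter_subset_right
  apply Subset.antisymm
  · -- A ⊆ dualAtt
    intro x hx
    obtain ⟨T, hT0, hTabs⟩ := absorb hS hO'open (hAomega ▸ hAO' : omegaS F S U ⊆ O')
    -- for each j, a point p with x reachable from p in time j+1, p near A
    have hp : ∀ j : ℕ, ∃ p, p ∈ closure O' ∩ S ∧ x ∈ mflow F S ((j:ℝ)+1) p := by
      intro j
      have hx2 : x ∈ closure (mflowSet F S (Ici (T + (j:ℝ) + 1)) U) := by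
        rw [← hAomega, omegaS] at hx
        exact mem_iInter₂.mp hx (T + (j:ℝ) + 1) (by simp only [mem_Ici]; positivity)
      obtain ⟨seq, hseqmem, hseqlim⟩ := mem_closure_iff_seq_limit.mp hx2
      have hqs : ∀ k, ∃ q, (q ∈ O' ∩ S) ∧ seq k ∈ mflow F S ((j:ℝ)+1) q := by
        intro k
        obtain ⟨s, hs, u, hu, hmem⟩ := mem_mflowSet_iff.mp (hseqmem k)
        simp only [mem_Ici] at hs
        obtain ⟨z, hz1, hz2⟩ := mflow_split (r := s - ((j:ℝ)+1))
          (by linarith) (by linarith) hmem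
        have hzO' : z ∈ O' := hTabs (mem_mflowSet_iff.mpr ⟨s - ((j:ℝ)+1), by
          simp only [mem_Ici]; linarith, u, hu, hz1⟩)
        have hzS : z ∈ S := mflow_subset (by linarith) u hz1
        have heqt : s - (s - ((j:ℝ)+1)) = (j:ℝ)+1 := by ring
        rw [heqt] at hz2
        exact ⟨z, ⟨hzO', hzS⟩, hz2⟩
      choose qs hqs1 hqs2 using hqs
      obtain ⟨p, hpmem, φ, hφmono, hφlim⟩ := hcpt.tendsto_subseq
        (fun k => ⟨subset_closure (hqs1 k).1, (hqs1 k).2⟩)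
      refine ⟨p, hpmem, ?_⟩
      exact mflow_closed hX hF hSX hS (by positivity)
        (fun k => hqs2 (φ k)) hφlim (hseqlim.comp hφmono.tendsto_atTop)
    choose ps hps1 hps2 using hp
    obtain ⟨y, hymem, φ, hφmono, hφlim⟩ := hcpt.tendsto_subseq hps1
    have hyU : y ∈ U := hOS ⟨hO'cl hymem.1, hymem.2⟩
    have hyalpha : y ∈ alphaS F S {x} := by
      rw [alphaS, mem_iInter₂]
      intro t ht
      refine mem_closure_of_tendsto hφlim ?_
      filter_upwards [eventually_ge_atTop ⌈-t⌉₊] with j hj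
      rw [mflowDualSet]
      simp only [mem_iUnion, mem_setOf_eq]
      refine ⟨-((((φ j) : ℕ):ℝ)+1), ?_, x, rfl, ?_⟩
      · simp only [mem_Iic]
        have h1 : ((⌈-t⌉₊ : ℕ):ℝ) ≤ ((φ j : ℕ):ℝ) := Nat.cast_le.mpr (le_trans hj (hφmono.le_apply))
        have h2 : -t ≤ ((⌈-t⌉₊ : ℕ):ℝ) := Nat.le_ceil (-t)
        linarith
      · rw [neg_neg]
        exact hps2 (φ j)
    have hynotR : y ∉ dualRep F S A := by
      intro hcon
      exact hcon.2 (hAomega ▸ omegaS_mono (singleton_subset_iff.mpr hyU))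
    refine ⟨hAS hx, ?_⟩
    intro hsub
    exact hynotR (hsub hyalpha)
  · -- dualAtt ⊆ A
    rintro x ⟨hxS, hnsub⟩
    obtain ⟨y, hyalpha, hynotR⟩ := not_subset.mp hnsub
    have hyS : y ∈ S := alphaS_subset_S hS.isClosed {x} hyalpha
    have hyomega : omegaS F S {y} ⊆ A := by
      by_contra hcon
      exact hynotR ⟨hyS, hcon⟩
    obtain ⟨t₀, ht₀0, ht₀abs⟩ := absorb hS hOopen (hyomega.trans hAO)
    -- approximating backward points
    have hbj : ∀ j : ℕ, ∃ p τ, t₀ + (j:ℝ) + 1 ≤ τ ∧ x ∈ mflow F S τ p ∧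
        dist y p < 1/((j:ℝ)+1) := by
      intro j
      have h1 : y ∈ closure (mflowDualSet F S (Iic (-(t₀ + (j:ℝ) + 1))) {x}) := by
        rw [alphaS, mem_iInter₂] at hyalpha
        exact hyalpha (-(t₀ + (j:ℝ) + 1)) (by simp only [mem_Iio]; linarith)
      obtain ⟨p, hp, hdist⟩ := Metric.mem_closure_iff.mp h1 (1/((j:ℝ)+1)) (by positivity)
      rw [mflowDualSet] at hp
      simp only [mem_iUnion, mem_setOf_eq] at hp
      obtain ⟨s, hs, a, ha, hmem⟩ := hp
      simp only [mem_Iic] at hs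
      rw [mem_singleton_iff] at ha
      subst ha
      exact ⟨p, -s, by linarith, hmem, hdist⟩
    choose bs τs hτs hxmem hdists using hbj
    have hbs_lim : Tendsto bs atTop (𝓝 y) := by
      rw [Metric.tendsto_nhds]
      intro ε hε
      obtain ⟨j₀, hj₀⟩ := exists_nat_gt (1/ε)
      filter_upwards [eventually_ge_atTop j₀] with j hj
      have h1 : 1/((j:ℝ)+1) < ε := by
        rw [div_lt_iff₀ (by positivity)]
        rw [div_lt_iff₀ hε] at hj₀
        have : (j₀:ℝ) ≤ (j:ℝ) := Nat.cast_le.mpr hj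
        nlinarith
      rw [dist_comm]
      exact lt_trans (hdists j) h1
    have hsplit : ∀ j, ∃ z, z ∈ mflow F S t₀ (bs j) ∧ x ∈ mflow F S (τs j - t₀) z :=
      fun j => mflow_split ht₀0 (by linarith [hτs j]) (hxmem j)
    choose zs hzs1 hzs2 using hsplit
    have hzsS : ∀ j, zs j ∈ S := fun j => mflow_subset ht₀0 _ (hzs1 j)
    obtain ⟨z, hzS, φ, hφmono, hφlim⟩ := hS.tendsto_subseq hzsS
    have hz : z ∈ mflow F S t₀ y := mflow_closed hX hF hSX hS ht₀0
      (fun k => hzs1 (φ k)) (hbs_lim.comp hφmono.tendsto_atTop) hφlim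
    have hzO : z ∈ O := ht₀abs (mem_mflowSet_iff.mpr ⟨t₀, self_mem_Ici, y, rfl, hz⟩)
    have hevU : ∀ᶠ k in atTop, zs (φ k) ∈ U := by
      filter_upwards [hφlim.eventually (hOopen.mem_nhds hzO)] with k hk
      exact hOS ⟨hk, hzsS (φ k)⟩
    rw [← hAomega, omegaS, mem_iInter₂]
    intro t ht0
    obtain ⟨k, hkU, hkt⟩ := (hevU.and (eventually_ge_atTop ⌈t⌉₊)).exists
    apply subset_closure
    refine mem_mflowSet_iff.mpr ⟨τs (φ k) - t₀, ?_, zs (φ k), hkU, hzs2 (φ k)⟩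
    simp only [mem_Ici]
    have h1 : ((⌈t⌉₊:ℕ):ℝ) ≤ ((φ k : ℕ):ℝ) := Nat.cast_le.mpr (le_trans hkt hφmono.le_apply)
    have h2 : t ≤ ((⌈t⌉₊:ℕ):ℝ) := Nat.le_ceil t
    have h3 := hτs (φ k)
    linarith
end

section
/- Consider the differential inclusion ẋ ∈ F(x) on X = [−1,1] where F(x) = {0} for x ∈ [−1,0), F(0) = [0,1], and F(x) = {1−x} for x ∈ (0,1]. Then for S = [−1,1] (which is invariant), A = {1} is an attractor in S, and the restricted omega-limit set of the point 0 is ω_S(0) = [0,1]; in particular ω_S(0) ∩ A ≠ ∅ but ω_S(0) ⊄ A. -/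
open Set MeasureTheory Filter Topology

open DIncl Set MeasureTheory Filter Topology


namespace OmegaEx

/-- The basic solution family: rest at `0` until time `s`, then follow `ẋ = 1 - x`. -/
noncomputable def sol (s t : ℝ) : ℝ := max 0 (1 - Real.exp (s - t))

/-- Its velocity. -/
noncomputable def vsol (s t : ℝ) : ℝ := if t < s then 0 else Real.exp (s - t)

lemma sol_nonneg (s t : ℝ) : 0 ≤ sol s t := le_max_left _ _

lemma sol_le_one (s t : ℝ) : sol s t ≤ 1 :=
  max_le (by norm_num) (by nlinarith [Real.exp_pos (s - t)])

lemma sol_mem (s t : ℝ) : sol s t ∈ Icc (-1:ℝ) 1 :=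
  ⟨by linarith [sol_nonneg s t], sol_le_one s t⟩

lemma sol_of_le (s t : ℝ) (h : t ≤ s) : sol s t = 0 := by
  have h1 : 1 ≤ Real.exp (s - t) := Real.one_le_exp (by linarith)
  exact max_eq_left (by linarith)

lemma sol_of_ge (s t : ℝ) (h : s ≤ t) : sol s t = 1 - Real.exp (s - t) := by
  have h1 : Real.exp (s - t) ≤ 1 := by
    rw [← Real.exp_zero]; exact Real.exp_le_exp.mpr (by linarith)
  exact max_eq_right (by linarith)

lemma sol_continuous (s : ℝ) : Continuous (sol s) :=
  continuous_const.max (continuous_const.sub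
    (Real.continuous_exp.comp (continuous_const.sub continuous_id)))

lemma sol_hasDeriv (s t : ℝ) : HasDerivWithinAt (sol s) (vsol s t) (Ioi t) t := by
  rcases lt_or_ge t s with h | h
  · have hv : vsol s t = 0 := if_pos h
    rw [hv]
    have hev : ∀ᶠ u in 𝓝[>] t, sol s u = (fun _ => (0:ℝ)) u := by
      filter_upwards [mem_nhdsWithin_of_mem_nhds (isOpen_Iio.mem_nhds h)] with u hu
      exact sol_of_le s u (le_of_lt hu)
    exact (hasDerivWithinAt_const t (Ioi t) 0).congr_of_eventuallyEq hev (sol_of_le s t h.le)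
  · have hv : vsol s t = Real.exp (s - t) := if_neg (not_lt.mpr h)
    have hd : HasDerivWithinAt (fun u => 1 - Real.exp (s - u)) (Real.exp (s - t)) (Ioi t) t := by
      have h1 : HasDerivAt (fun u : ℝ => s - u) (-1) t := by
        simpa using (hasDerivAt_id' t).const_sub s
      have h2 : HasDerivAt (fun u : ℝ => Real.exp (s - u)) (Real.exp (s - t) * (-1)) t :=
        (Real.hasDerivAt_exp (s - t)).comp t h1
      have h3 : HasDerivAt (fun u : ℝ => 1 - Real.exp (s - u)) (Real.exp (s - t)) t := by
        simpa using h2.const_sub (1:ℝ)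
      exact h3.hasDerivWithinAt
    rw [hv]
    refine hd.congr_of_eventuallyEq ?_ (sol_of_ge s t h)
    filter_upwards [self_mem_nhdsWithin] with u hu
    exact sol_of_ge s u (h.trans (le_of_lt hu))

lemma vsol_intble (s a b : ℝ) : IntervalIntegrable (vsol s) volume a b := by
  have hg : IntervalIntegrable (fun t => Real.exp (s - t)) volume a b :=
    (Real.continuous_exp.comp (continuous_const.sub continuous_id)).intervalIntegrable a b
  refine hg.mono_fun ?_ ?_
  · exact (Measurable.ite measurableSet_Iio measurable_const
      (Real.measurable_exp.comp (measurable_const.sub measurable_id))).aestronglyMeasurable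
  · refine Eventually.of_forall fun t => ?_
    simp only [Real.norm_eq_abs, abs_of_nonneg (Real.exp_pos (s - t)).le]
    unfold vsol; split
    · simp [(Real.exp_pos (s - t)).le]
    · rw [abs_of_nonneg (Real.exp_pos (s - t)).le]

lemma integral_vsol (s a b : ℝ) : ∫ t in a..b, vsol s t = sol s b - sol s a := by
  have key : ∀ a b : ℝ, a ≤ b → ∫ t in a..b, vsol s t = sol s b - sol s a := fun a b hab =>
    intervalIntegral.integral_eq_sub_of_hasDeriv_right_of_le hab
      (sol_continuous s).continuousOn (fun u _ => sol_hasDeriv s u) (vsol_intble s a b)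
  rcases le_total a b with h | h
  · exact key a b h
  · rw [intervalIntegral.integral_symm, key b a h]; ring

section

variable {F : ℝ → Set ℝ}
  (hF : ∀ x : ℝ, F x =
      if x < 0 then ({0} : Set ℝ) else if x = 0 then Icc (0:ℝ) 1 else {1 - x})

include hF

lemma F_sub {y : ℝ} (hy : y ∈ Icc (-1:ℝ) 1) : F y ⊆ Icc (0:ℝ) 1 := by
  rw [hF]
  split_ifs with h1 h2
  · intro z hz; rw [mem_singleton_iff] at hz; subst hz; norm_num
  · exact subset_rfl
  · intro z hz; rw [mem_singleton_iff] at hz; subst hz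
    have h3 : 0 < y := lt_of_le_of_ne (not_lt.mp h1) (Ne.symm h2)
    exact ⟨by linarith [hy.2], by linarith⟩

lemma isSolOn_sol (s : ℝ) : IsSolOn F (Icc (-1:ℝ) 1) (sol s) univ := by
  refine ⟨fun t _ => sol_mem s t, vsol s, fun a _ b _ => vsol_intble s a b,
    Eventually.of_forall fun t _ => ?_, fun a _ b _ => by rw [integral_vsol]; ring⟩
  rw [hF]
  rcases le_or_gt t s with h | h
  · have h0 : sol s t = 0 := sol_of_le s t h
    rw [h0, if_neg (lt_irrefl 0), if_pos rfl]
    unfold vsol; split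
    · norm_num
    · constructor
      · exact (Real.exp_pos _).le
      · rw [← Real.exp_zero]; exact Real.exp_le_exp.mpr (by linarith)
  · have h1 : sol s t = 1 - Real.exp (s - t) := sol_of_ge s t h.le
    have h2 : Real.exp (s - t) < 1 := by
      rw [← Real.exp_zero]; exact Real.exp_lt_exp.mpr (by linarith)
    have hpos : 0 < sol s t := by rw [h1]; linarith
    rw [if_neg (not_lt.mpr hpos.le), if_neg hpos.ne']
    have hv : vsol s t = Real.exp (s - t) := if_neg (not_lt.mpr h.le)
    rw [mem_singleton_iff, hv, h1]; ring

lemma zero_mem_F {c : ℝ} (hc : c ≤ 0 ∨ c = 1) : (0:ℝ) ∈ F c := by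
  rw [hF]
  rcases hc with hc | hc
  · split_ifs with h1 h2
    · exact mem_singleton 0
    · norm_num
    · exact absurd (lt_of_le_of_ne (not_lt.mp h1) (Ne.symm h2)) (not_lt.mpr hc)
  · subst hc; norm_num

lemma isSolOn_const {c : ℝ} (hc : c ∈ Icc (-1:ℝ) 1) (h0 : (0:ℝ) ∈ F c) (I : Set ℝ) :
    IsSolOn F (Icc (-1:ℝ) 1) (fun _ => c) I := by
  exact ⟨fun _ _ => hc, fun _ => 0, fun a _ b _ => intervalIntegrable_const,
    Eventually.of_forall fun _ _ => h0, fun a _ b _ => by simp⟩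

omit hF

lemma IsSolOn.mono' {X : Set ℝ} {x : ℝ → ℝ} {I J : Set ℝ} (h : IsSolOn F X x I) (hJ : J ⊆ I) :
    IsSolOn F X x J := by
  obtain ⟨h1, v, h2, h3, h4⟩ := h
  exact ⟨fun t ht => h1 t (hJ ht), v, fun a ha b hb => h2 a (hJ ha) b (hJ hb),
    h3.mono fun t ht hm => ht (hJ hm), fun a ha b hb => h4 a (hJ ha) b (hJ hb)⟩

include hF

/-- Any solution staying in `[-1,1]` is nondecreasing. -/
lemma sol_mono {T : ℝ} {x : ℝ → ℝ} (hx : IsSolOn F (Icc (-1:ℝ) 1) x (Icc 0 T))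
    {a b : ℝ} (ha : a ∈ Icc 0 T) (hb : b ∈ Icc 0 T) (hab : a ≤ b) : x a ≤ x b := by
  obtain ⟨hmem, v, hint, hae, heq⟩ := hx
  have hnn : ∀ᵐ t ∂(volume.restrict (Icc a b)), 0 ≤ v t := by
    filter_upwards [ae_restrict_of_ae hae, ae_restrict_mem measurableSet_Icc] with t h1 h2
    have htT : t ∈ Icc 0 T := ⟨ha.1.trans h2.1, h2.2.trans hb.2⟩
    exact (F_sub hF (hmem t htT) (h1 htT)).1
  have h0 : 0 ≤ ∫ t in a..b, v t :=
    intervalIntegral.integral_nonneg_of_ae_restrict hab hnn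
  have := heq a ha b hb
  linarith

/-- Quantitative attraction estimate: solutions starting in `[1/2, 1]` satisfy
`x T ≥ 1 - 1/(2(1+T))`. -/
lemma sol_estimate {T : ℝ} (hT : 0 ≤ T) {x : ℝ → ℝ}
    (hx : IsSolOn F (Icc (-1:ℝ) 1) x (Icc 0 T)) (h0 : 1/2 ≤ x 0) :
    1 - 1/(2*(1+T)) ≤ x T := by
  have h0T : (0:ℝ) ∈ Icc 0 T := ⟨le_rfl, hT⟩
  have hTT : T ∈ Icc 0 T := ⟨hT, le_rfl⟩
  have hmono := fun a b ha hb hab => sol_mono hF hx (a := a) (b := b) ha hb hab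
  obtain ⟨hmem, v, hint, hae, heq⟩ := hx
  have hxT1 : x T ≤ 1 := (hmem T hTT).2
  have key : ∀ᵐ t ∂(volume.restrict (Icc 0 T)), 1 - x T ≤ v t := by
    filter_upwards [ae_restrict_of_ae hae, ae_restrict_mem measurableSet_Icc] with t h1 h2
    have hv := h1 h2
    have hxt : 1/2 ≤ x t := h0.trans (hmono 0 t h0T h2 h2.1)
    have hpos : 0 < x t := by linarith
    rw [hF, if_neg (not_lt.mpr hpos.le), if_neg hpos.ne', mem_singleton_iff] at hv
    rw [hv]
    have := hmono t T h2 hTT h2.2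
    linarith
  have hci : IntervalIntegrable (fun _ => 1 - x T) volume 0 T := intervalIntegrable_const
  have hvi := hint 0 h0T T hTT
  have hle := intervalIntegral.integral_mono_ae_restrict hT hci hvi key
  rw [intervalIntegral.integral_const, smul_eq_mul] at hle
  have hxeq := heq 0 h0T T hTT
  have h1T : (0:ℝ) < 1 + T := by linarith
  have h2 : (1 - x T) * (2*(1+T)) ≤ 1 := by nlinarith [hle, hxeq]
  have h3 : 1 - x T ≤ 1/(2*(1+T)) := by
    rw [le_div_iff₀ (by linarith : (0:ℝ) < 2*(1+T))]; linarith
  linarith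

end

end OmegaEx

open OmegaEx in
/-- Example: the omega-limit set of a point can meet an attractor without being
contained in it. -/
theorem example_omega_meets_attractor (F : ℝ → Set ℝ)
    (hF : ∀ x : ℝ, F x =
      if x < 0 then ({0} : Set ℝ) else if x = 0 then Icc (0:ℝ) 1 else {1 - x}) :
    IsInvSet F (Icc (-1:ℝ) 1) ∧
    IsAttractorIn F (Icc (-1:ℝ) 1) {1} ∧
    omegaS F (Icc (-1:ℝ) 1) {0} = Icc (0:ℝ) 1 ∧
    (Icc (0:ℝ) 1 ∩ ({1} : Set ℝ)).Nonempty ∧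
    ¬ (Icc (0:ℝ) 1 ⊆ ({1} : Set ℝ)) := by
  have hS1 : (1:ℝ) ∈ Icc (-1:ℝ) 1 := by norm_num
  refine ⟨?_, ?_, ?_, ⟨1, ⟨by norm_num, rfl⟩⟩, ?_⟩
  · -- invariance
    intro x₀ hx₀
    rcases le_or_gt x₀ 0 with h | h
    · exact ⟨fun _ => x₀, isSolOn_const hF hx₀ (zero_mem_F hF (Or.inl h)) univ, rfl⟩
    · rcases eq_or_lt_of_le hx₀.2 with h1 | h1
      · exact ⟨fun _ => x₀, isSolOn_const hF hx₀ (zero_mem_F hF (Or.inr h1)) univ, rfl⟩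
      · refine ⟨sol (Real.log (1 - x₀)), isSolOn_sol hF _, ?_⟩
        have hpos : 0 < 1 - x₀ := by linarith
        have he : sol (Real.log (1 - x₀)) 0 = max 0 (1 - (1 - x₀)) := by
          unfold sol; rw [sub_zero, Real.exp_log hpos]
        rw [he, sub_sub_cancel]
        exact max_eq_right h.le
  · -- attractor
    refine ⟨singleton_subset_iff.mpr hS1, Icc (1/2) 1, ?_, Icc_subset_Icc (by norm_num) le_rfl, ?_⟩
    · intro y hy
      rw [mem_singleton_iff] at hy; subst hy
      refine ⟨hS1, ?_⟩
      rw [mem_nhdsWithin]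
      exact ⟨Ioi (1/2), isOpen_Ioi, by norm_num, fun z hz => ⟨hz.1.le, hz.2.2⟩⟩
    · apply Subset.antisymm
      · intro y hy
        simp only [omegaS, mem_iInter, mem_Ici] at hy
        have hb : ∀ t : ℝ, 0 ≤ t → y ∈ Icc (1 - 1/(2*(1+t))) 1 := by
          intro t ht
          refine closure_minimal ?_ isClosed_Icc (hy t ht)
          intro b hbm
          simp only [mflowSet, mem_iUnion, mem_Ici] at hbm
          obtain ⟨T, hTt, a, ha, xf, hsol, hx0, hxT⟩ := hbm
          have hT0 : 0 ≤ T := le_trans ht hTt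
          have h12 : 1/2 ≤ xf 0 := by rw [hx0]; exact ha.1
          have hest := sol_estimate hF hT0 hsol h12
          have hx1 : xf T ≤ 1 := (hsol.1 T ⟨hT0, le_rfl⟩).2
          subst hxT
          refine ⟨?_, hx1⟩
          have hdiv : 1/(2*(1+T)) ≤ 1/(2*(1+t)) := by
            apply one_div_le_one_div_of_le (by linarith) (by linarith)
          linarith
        have h1 := (hb 0 le_rfl).2
        rw [mem_singleton_iff]
        by_contra hne
        have hlt : y < 1 := lt_of_le_of_ne h1 hne
        have hy0 : 0 < 1 - y := by linarith
        have ht₀ : (0:ℝ) ≤ 1/(1 - y) := by positivity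
        have h3 := (hb (1/(1-y)) ht₀).1
        have hmul : (1 - y) * (1/(1 - y)) = 1 := mul_one_div_cancel hy0.ne'
        have h2 : 1/(2*(1+1/(1-y))) < 1 - y := by
          rw [div_lt_iff₀ (by positivity)]
          nlinarith [hmul]
        linarith
      · rw [singleton_subset_iff]
        simp only [omegaS, mem_iInter, mem_Ici]
        intro t ht
        apply subset_closure
        simp only [mflowSet, mem_iUnion, mem_Ici]
        exact ⟨t, le_rfl, 1, ⟨by norm_num, le_rfl⟩, fun _ => 1,
          isSolOn_const hF hS1 (zero_mem_F hF (Or.inr rfl)) _, rfl, rfl⟩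
  · -- omega limit set of 0
    apply Subset.antisymm
    · intro y hy
      simp only [omegaS, mem_iInter, mem_Ici] at hy
      refine closure_minimal ?_ isClosed_Icc (hy 0 le_rfl)
      intro b hbm
      simp only [mflowSet, mem_iUnion, mem_Ici] at hbm
      obtain ⟨T, hT0, a, ha, xf, hsol, hx0, hxT⟩ := hbm
      rw [mem_singleton_iff] at ha
      subst ha
      have h1 : xf T ≤ 1 := (hsol.1 T ⟨hT0, le_rfl⟩).2
      have h0 : 0 ≤ xf T := by
        have := sol_mono hF hsol ⟨le_rfl, hT0⟩ ⟨hT0, le_rfl⟩ hT0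
        rw [hx0] at this
        exact this
      subst hxT
      exact ⟨h0, h1⟩
    · intro c hc
      simp only [omegaS, mem_iInter, mem_Ici]
      intro t ht
      have hsub : Ico (0:ℝ) 1 ⊆ mflowSet F (Icc (-1:ℝ) 1) (Ici t) {0} := by
        intro c' hc'
        have hc1 : 0 < 1 - c' := by linarith [hc'.2]
        have hlog : Real.log (1 - c') ≤ 0 :=
          Real.log_nonpos (by linarith [hc'.1]) (by linarith [hc'.1])
        have hTs : -(Real.log (1 - c')) ≤ max t (-(Real.log (1 - c'))) := le_max_right _ _
        have hTt : t ≤ max t (-(Real.log (1 - c'))) := le_max_left _ _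
        set T := max t (-(Real.log (1 - c'))) with hTdef
        set s := T + Real.log (1 - c') with hsdef
        have hs0 : 0 ≤ s := by rw [hsdef]; linarith
        have hsT : s ≤ T := by rw [hsdef]; linarith
        simp only [mflowSet, mem_iUnion, mem_Ici]
        refine ⟨T, hTt, 0, rfl, sol s, IsSolOn.mono' (isSolOn_sol hF s) (subset_univ _),
          sol_of_le s 0 hs0, ?_⟩
        rw [sol_of_ge s T hsT, hsdef,
          show T + Real.log (1 - c') - T = Real.log (1 - c') by ring, Real.exp_log hc1]
        ring
      have hcl : Icc (0:ℝ) 1 ⊆ closure (mflowSet F (Icc (-1:ℝ) 1) (Ici t) {0}) := by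
        rw [← closure_Ico (by norm_num : (0:ℝ) ≠ 1)]
        exact closure_mono hsub
      exact hcl hc
  · intro h
    have := h (show (0:ℝ) ∈ Icc (0:ℝ) 1 by norm_num)
    norm_num at this
end

section
/- Semicontinuity of isolated invariant sets under perturbation: let F : X × [−1,1] → Set ℝⁿ satisfy the Filippov conditions on compact X ⊂ ℝⁿ, let Φ_λ be the solution multiflow of ẋ ∈ F(x,λ), and let N be a compact set that is an isolating neighborhood for every Φ_λ, λ ∈ I, a closed interval around 0. Set S_λ := Inv(N, Φ_λ). If λ_n → 0, x_n ∈ S_{λ_n}, and x_n → x, then x ∈ S_0. -/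
open Set MeasureTheory Filter Topology

open DIncl Set MeasureTheory Filter Topology


namespace InvSemiAux

open Set MeasureTheory Filter Topology intervalIntegral NNReal DIncl

section FTC

variable {E : Type*} [NormedAddCommGroup E] [NormedSpace ℝ E] [CompleteSpace E]
  [FiniteDimensional ℝ E] [MeasurableSpace E] [BorelSpace E]

omit [CompleteSpace E] [FiniteDimensional ℝ E] [MeasurableSpace E] [BorelSpace E] in
theorem lip_norm_deriv_le {C : ℝ≥0} {f : ℝ → E} (hf : LipschitzWith C f) (t : ℝ) :
    ‖deriv f t‖ ≤ C := by
  by_cases hd : DifferentiableAt ℝ f t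
  · have h := hd.hasDerivAt
    rw [hasDerivAt_iff_tendsto_slope] at h
    refine le_of_tendsto h.norm ?_
    filter_upwards [self_mem_nhdsWithin] with s hs
    have hle : ‖f s - f t‖ ≤ C * ‖s - t‖ := by
      simpa [dist_eq_norm] using hf.dist_le_mul s t
    rw [slope_def_module, norm_smul, norm_inv, Real.norm_eq_abs, ← Real.norm_eq_abs, ← norm_inv]
    calc ‖(s - t)⁻¹‖ * ‖f s - f t‖ ≤ ‖(s - t)⁻¹‖ * (C * ‖s - t‖) := by gcongr
      _ = (C:ℝ) * (‖s - t‖⁻¹ * ‖s - t‖) := by rw [norm_inv]; ring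
      _ ≤ (C:ℝ) * 1 := by
          gcongr
          rcases eq_or_ne (s - t) 0 with h0 | h0
          · simp [h0]
          · rw [inv_mul_cancel₀ (norm_ne_zero_iff.mpr h0)]
      _ = C := mul_one _
  · rw [deriv_zero_of_not_differentiableAt hd]; simp

theorem lip_intervalIntegrable_deriv {C : ℝ≥0} {f : ℝ → E} (hf : LipschitzWith C f)
    (a b : ℝ) : IntervalIntegrable (deriv f) volume a b := by
  rw [intervalIntegrable_iff]
  haveI : IsFiniteMeasure (volume.restrict (uIoc a b)) :=
    ⟨by rw [Measure.restrict_apply_univ]; exact measure_Ioc_lt_top⟩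
  refine (integrable_const (C : ℝ)).mono' ((measurable_deriv f).aestronglyMeasurable.restrict) ?_
  exact Eventually.of_forall fun t => lip_norm_deriv_le hf t

omit [MeasurableSpace E] [BorelSpace E] in
theorem lipschitz_ftc {C : ℝ≥0} {f : ℝ → E} (hf : LipschitzWith C f) (a b : ℝ) :
    f b = f a + ∫ t in a..b, deriv f t := by
  have hcont := hf.continuous
  have hmpos : ∀ m : ℕ, (0:ℝ) < (m + 1 : ℝ) := fun m => by positivity
  have hinv : Tendsto (fun m : ℕ => ((m:ℝ) + 1)⁻¹) atTop (𝓝 0) :=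
    tendsto_one_div_add_atTop_nhds_zero_nat.congr fun m => by rw [one_div]
  set g : ℕ → ℝ → E := fun m t => ((m:ℝ) + 1) • (f (t + ((m:ℝ) + 1)⁻¹) - f t) with hg
  have hint : ∀ c d : ℝ, IntervalIntegrable f volume c d := fun c d =>
    hcont.intervalIntegrable c d
  have hints : ∀ (h : ℝ) (c d : ℝ), IntervalIntegrable (fun t => f (t + h)) volume c d :=
    fun h c d => (hcont.comp (continuous_id.add continuous_const)).intervalIntegrable c d
  have h1 : Tendsto (fun m => ∫ t in a..b, g m t) atTop (𝓝 (∫ t in a..b, deriv f t)) := by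
    refine tendsto_integral_filter_of_dominated_convergence (fun _ => (C:ℝ)) ?_ ?_ ?_ ?_
    · refine Eventually.of_forall fun m => (Continuous.aestronglyMeasurable ?_).restrict
      exact (continuous_const.smul ((hcont.comp (continuous_id.add continuous_const)).sub hcont))
    · refine Eventually.of_forall fun m => Eventually.of_forall fun t _ => ?_
      have hle : ‖f (t + ((m:ℝ) + 1)⁻¹) - f t‖ ≤ C * ((m:ℝ) + 1)⁻¹ := by
        have h2 := hf.dist_le_mul (t + ((m:ℝ) + 1)⁻¹) t
        rwa [dist_eq_norm, Real.dist_eq, add_sub_cancel_left,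
          abs_of_pos (inv_pos.mpr (hmpos m))] at h2
      simp only [hg, norm_smul, Real.norm_eq_abs, abs_of_pos (hmpos m)]
      calc ((m:ℝ) + 1) * ‖f (t + ((m:ℝ) + 1)⁻¹) - f t‖
          ≤ ((m:ℝ) + 1) * ((C:ℝ) * ((m:ℝ) + 1)⁻¹) := by gcongr
        _ = (C:ℝ) * (((m:ℝ) + 1) * ((m:ℝ) + 1)⁻¹) := by ring
        _ = C := by rw [mul_inv_cancel₀ (hmpos m).ne', mul_one]
    · exact intervalIntegrable_const
    · have hae : ∀ᵐ t ∂(volume : Measure ℝ), DifferentiableAt ℝ f t :=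
        hf.ae_differentiableAt_real
      refine hae.mono fun t ht => ?_
      intro _
      have h := ht.hasDerivAt
      rw [hasDerivAt_iff_tendsto_slope] at h
      have hcomp : Tendsto (fun m : ℕ => t + ((m:ℝ) + 1)⁻¹) atTop (𝓝[≠] t) := by
        apply tendsto_nhdsWithin_of_tendsto_nhds_of_eventually_within
        · simpa using tendsto_const_nhds.add hinv
        · exact Eventually.of_forall fun m => by
            simp [(inv_pos.mpr (hmpos m)).ne']
      refine (h.comp hcomp).congr fun m => ?_
      simp only [Function.comp_apply, slope_def_module, add_sub_cancel_left, inv_inv, hg]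
  have key : ∀ m : ℕ, ∫ t in a..b, g m t =
      ((m:ℝ) + 1) • ((∫ t in b..(b + ((m:ℝ) + 1)⁻¹), f t)
        - ∫ t in a..(a + ((m:ℝ) + 1)⁻¹), f t) := by
    intro m
    set h := ((m:ℝ) + 1)⁻¹ with hh
    simp only [hg]
    rw [intervalIntegral.integral_smul]
    congr 1
    rw [intervalIntegral.integral_sub (hints h a b) (hint a b),
      intervalIntegral.integral_comp_add_right f h]
    have e1 : (∫ t in (a + h)..(b + h), f t)
        = (∫ t in (a + h)..b, f t) + ∫ t in b..(b + h), f t :=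
      (intervalIntegral.integral_add_adjacent_intervals (hint _ _) (hint _ _)).symm
    have e2 : (∫ t in a..b, f t) = (∫ t in a..(a + h), f t) + ∫ t in (a + h)..b, f t :=
      (intervalIntegral.integral_add_adjacent_intervals (hint _ _) (hint _ _)).symm
    rw [e1, e2]; abel
  have hav : ∀ c : ℝ, Tendsto
      (fun m : ℕ => ((m:ℝ) + 1) • ∫ t in c..(c + ((m:ℝ) + 1)⁻¹), f t) atTop (𝓝 (f c)) := by
    intro c
    rw [tendsto_iff_norm_sub_tendsto_zero]
    have hbound : ∀ m : ℕ,
        ‖(((m:ℝ) + 1) • ∫ t in c..(c + ((m:ℝ) + 1)⁻¹), f t) - f c‖ ≤ (C:ℝ) * ((m:ℝ) + 1)⁻¹ := by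
      intro m
      set h := ((m:ℝ) + 1)⁻¹ with hh
      have h0 : (0:ℝ) < h := inv_pos.mpr (hmpos m)
      have hc : (((m:ℝ) + 1)) • ((c + h - c) • f c) = f c := by
        rw [add_sub_cancel_left, smul_smul, mul_inv_cancel₀ (hmpos m).ne', one_smul]
      have hrw : (((m:ℝ) + 1) • ∫ t in c..(c + h), f t) - f c
          = ((m:ℝ) + 1) • ∫ t in c..(c + h), (f t - f c) := by
        calc (((m:ℝ) + 1) • ∫ t in c..(c + h), f t) - f c
            = (((m:ℝ) + 1) • ∫ t in c..(c + h), f t)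
              - ((m:ℝ) + 1) • ((c + h - c) • f c) := by rw [hc]
          _ = ((m:ℝ) + 1) • ((∫ t in c..(c + h), f t) - (c + h - c) • f c) :=
              (smul_sub _ _ _).symm
          _ = ((m:ℝ) + 1) • ∫ t in c..(c + h), (f t - f c) := by
              rw [intervalIntegral.integral_sub (hint _ _) intervalIntegrable_const,
                intervalIntegral.integral_const]
      rw [hrw]
      have hb2 : ‖∫ t in c..(c + h), (f t - f c)‖ ≤ ((C:ℝ) * h) * |c + h - c| := by
        apply intervalIntegral.norm_integral_le_of_norm_le_const
        intro t ht
        rw [uIoc_of_le (by linarith : c ≤ c + h)] at ht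
        have hle : ‖f t - f c‖ ≤ C * ‖t - c‖ := by
          simpa [dist_eq_norm] using hf.dist_le_mul t c
        refine hle.trans ?_
        have : ‖t - c‖ ≤ h := by
          rw [Real.norm_eq_abs, abs_of_pos (by linarith [ht.1] : (0:ℝ) < t - c)]
          linarith [ht.2]
        gcongr
      rw [norm_smul, Real.norm_eq_abs, abs_of_pos (hmpos m)]
      calc ((m:ℝ) + 1) * ‖∫ t in c..(c + h), (f t - f c)‖
          ≤ ((m:ℝ) + 1) * (((C:ℝ) * h) * |c + h - c|) := by gcongr
        _ = (C:ℝ) * h * (((m:ℝ) + 1) * h) := by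
            rw [add_sub_cancel_left, abs_of_pos h0]; ring
        _ = (C:ℝ) * h := by rw [hh, mul_inv_cancel₀ (hmpos m).ne', mul_one]
    refine squeeze_zero (fun m => norm_nonneg _) hbound ?_
    simpa using tendsto_const_nhds.mul hinv
  have h2 : Tendsto (fun m => ∫ t in a..b, g m t) atTop (𝓝 (f b - f a)) := by
    refine ((hav b).sub (hav a)).congr fun m => ?_
    rw [key m, smul_sub]
  have := tendsto_nhds_unique h1 h2
  rw [this]; abel

end FTC

/-- A uniformly bounded selection bound for an usc compact-valued map on a compact set. -/
theorem usc_bound {α E : Type*} [PseudoMetricSpace α] [NormedAddCommGroup E]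
    {G : α → Set E} {D : Set α} (hD : IsCompact D) (husc : USCOn G D)
    (hcomp : ∀ p ∈ D, IsCompact (G p)) :
    ∃ M : ℝ, 0 < M ∧ ∀ p ∈ D, ∀ z ∈ G p, ‖z‖ ≤ M := by
  classical
  have key : ∀ p : α, ∃ δ : ℝ, 0 < δ ∧ ∃ R : ℝ,
      p ∈ D → ∀ q ∈ D, dist q p < δ → ∀ z ∈ G q, ‖z‖ ≤ R := by
    intro p
    by_cases hp : p ∈ D
    · obtain ⟨δ, hδ, hsub⟩ := husc p hp 1 one_pos
      obtain ⟨R, hR⟩ := isBounded_iff_forall_norm_le.mp (hcomp p hp).isBounded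
      refine ⟨δ, hδ, R + 1, fun _ q hq hdq z hz => ?_⟩
      obtain ⟨w, hw, hzw⟩ := hsub q hq hdq hz
      have h3 : ‖z - w‖ < 1 := by rwa [← dist_eq_norm]
      have h4 := hR w hw
      calc ‖z‖ = ‖w + (z - w)‖ := by rw [add_sub_cancel]
        _ ≤ ‖w‖ + ‖z - w‖ := norm_add_le _ _
        _ ≤ R + 1 := by linarith
    · exact ⟨1, one_pos, 0, fun h => absurd h hp⟩
  choose δf hδf Rf hRf using key
  obtain ⟨t, htD, hcover⟩ := hD.elim_nhds_subcover (fun p => Metric.ball p (δf p))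
    (fun p _ => Metric.ball_mem_nhds _ (hδf p))
  refine ⟨1 + ((t.sup fun p => ⌈Rf p⌉₊ : ℕ) : ℝ), by positivity, fun q hq z hz => ?_⟩
  obtain ⟨p, hp, hqp⟩ := mem_iUnion₂.mp (hcover hq)
  have h1 : ‖z‖ ≤ Rf p := hRf p (htD p hp) q hq (Metric.mem_ball.mp hqp) z hz
  have h2 : Rf p ≤ (⌈Rf p⌉₊ : ℝ) := Nat.le_ceil _
  have h3 : ((⌈Rf p⌉₊ : ℕ) : ℝ) ≤ ((t.sup fun p => ⌈Rf p⌉₊ : ℕ) : ℝ) :=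
    Nat.cast_le.mpr (Finset.le_sup (f := fun p => ⌈Rf p⌉₊) hp)
  linarith

end InvSemiAux
open InvSemiAux in
/-- Semicontinuity of isolated invariant sets under perturbation. -/
theorem inv_semicontinuous {n : ℕ} (X : Set (Fin n → ℝ)) (hX : IsCompact X)
    (F : (Fin n → ℝ) → ℝ → Set (Fin n → ℝ))
    (hF : FilippovOn (fun p : (Fin n → ℝ) × ℝ => F p.1 p.2) (X ×ˢ Icc (-1:ℝ) 1))
    (N : Set (Fin n → ℝ)) (hNX : N ⊆ X) (hN : IsCompact N)
    (a b : ℝ) (ha : a < 0) (hb : 0 < b) (hI : Icc a b ⊆ Icc (-1:ℝ) 1)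
    (hiso : ∀ lam ∈ Icc a b, maxInv (F · lam) N ⊆ relInt X N)
    (lamn : ℕ → ℝ) (hlamI : ∀ k, lamn k ∈ Icc a b)
    (hlam : Tendsto lamn atTop (nhds 0))
    (xn : ℕ → (Fin n → ℝ)) (hxn : ∀ k, xn k ∈ maxInv (F · (lamn k)) N)
    (x : Fin n → ℝ) (hx : Tendsto xn atTop (nhds x)) :
    x ∈ maxInv (F · 0) N := by
  classical
  have hD : IsCompact (X ×ˢ Icc (-1:ℝ) 1) := hX.prod isCompact_Icc
  obtain ⟨M, hM0, hMb⟩ := usc_bound hD hF.1 (fun p hp => (hF.2 p hp).1)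
  have hmemD : ∀ (y : Fin n → ℝ) (lam : ℝ), y ∈ N → lam ∈ Icc a b →
      (y, lam) ∈ X ×ˢ Icc (-1:ℝ) 1 := fun y lam hy hl => ⟨hNX hy, hI hl⟩
  have h0mem : (0:ℝ) ∈ Icc (-1:ℝ) 1 := ⟨by norm_num, by norm_num⟩
  -- everywhere-defined selections for each k
  have hsol : ∀ k, ∃ ψ : ℝ → (Fin n → ℝ), (∀ t, ψ t ∈ N) ∧ ψ 0 = xn k ∧
      ∃ w : ℝ → (Fin n → ℝ), (∀ c d : ℝ, IntervalIntegrable w volume c d) ∧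
        (∀ t, w t ∈ F (ψ t) (lamn k)) ∧ (∀ c d : ℝ, ψ d = ψ c + ∫ t in c..d, w t) := by
    intro k
    obtain ⟨ψ, ⟨hmem, v, hvint, hvF, hvrep⟩, hψ0⟩ := hxn k
    refine ⟨ψ, fun t => hmem t trivial, hψ0, ?_⟩
    have hne : ∀ t : ℝ, (F (ψ t) (lamn k)).Nonempty := fun t =>
      (hF.2 (ψ t, lamn k) (hmemD _ _ (hmem t trivial) (hlamI k))).2.2
    set w : ℝ → (Fin n → ℝ) :=
      fun t => if v t ∈ F (ψ t) (lamn k) then v t else (hne t).some with hw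
    have heq : ∀ᵐ t ∂(volume : Measure ℝ), w t = v t := by
      filter_upwards [hvF] with t ht
      simp [hw, ht trivial]
    refine ⟨w, ?_, ?_, ?_⟩
    · intro c d
      have h1 := hvint c trivial d trivial
      rw [intervalIntegrable_iff] at h1 ⊢
      exact h1.congr (ae_restrict_of_ae (heq.mono fun t ht => ht.symm))
    · intro t
      by_cases h : v t ∈ F (ψ t) (lamn k)
      · simpa [hw, h] using h
      · simpa [hw, h] using (hne t).some_mem
    · intro c d
      rw [hvrep c trivial d trivial]
      congr 1
      exact intervalIntegral.integral_congr_ae (heq.mono fun t ht _ => ht.symm)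
  choose ψs hψN hψ0 ws hwint hwF hwrep using hsol
  have hwbound : ∀ k t, ‖ws k t‖ ≤ M := fun k t =>
    hMb _ (hmemD _ _ (hψN k t) (hlamI k)) _ (hwF k t)
  have hψdist : ∀ k c d, ‖ψs k d - ψs k c‖ ≤ M * |d - c| := by
    intro k c d
    rw [hwrep k c d, add_sub_cancel_left]
    exact intervalIntegral.norm_integral_le_of_norm_le_const fun u _ => hwbound k u
  have hψlip : ∀ k, LipschitzWith M.toNNReal (ψs k) := by
    intro k
    apply LipschitzWith.of_dist_le_mul
    intro s t
    rw [dist_eq_norm, Real.dist_eq, Real.coe_toNNReal _ hM0.le]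
    exact hψdist k t s
  -- limit along an ultrafilter
  obtain ⟨U, hU⟩ := Filter.exists_ultrafilter_le (atTop : Filter ℕ)
  have hlim : ∀ t : ℝ, ∃ p, p ∈ N ∧ Tendsto (fun k => ψs k t) (U : Filter ℕ) (𝓝 p) := by
    intro t
    obtain ⟨p, hpN, hple⟩ := hN.ultrafilter_le_nhds (U.map fun k => ψs k t) (by
      rw [Ultrafilter.coe_map, Filter.le_principal_iff, Filter.mem_map]
      exact Filter.univ_mem' fun k => hψN k t)
    exact ⟨p, hpN, by rwa [Filter.Tendsto, ← Ultrafilter.coe_map]⟩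
  choose ψ hψmemN hψtend using hlim
  have hψ0' : ψ 0 = x := by
    have h1 : Tendsto (fun k => ψs k 0) (U : Filter ℕ) (𝓝 x) := by
      have h2 : Tendsto xn (U : Filter ℕ) (𝓝 x) := hx.mono_left hU
      simpa [funext hψ0] using h2
    exact tendsto_nhds_unique (hψtend 0) h1
  have hψlip' : LipschitzWith M.toNNReal ψ := by
    apply LipschitzWith.of_dist_le_mul
    intro s t
    refine le_of_tendsto ((hψtend s).dist (hψtend t)) (Eventually.of_forall fun k => ?_)
    exact (hψlip k).dist_le_mul s t
  -- derivative at differentiability points lies in F(ψ u, 0)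
  have hkey : ∀ u : ℝ, DifferentiableAt ℝ ψ u → deriv ψ u ∈ F (ψ u) 0 := by
    intro u hdiff
    obtain ⟨hFpc, hFpconv, hFpne⟩ := hF.2 (ψ u, 0) ⟨hNX (hψmemN u), h0mem⟩
    have hcth : ∀ ε : ℝ, 0 < ε → deriv ψ u ∈ Metric.cthickening ε (F (ψ u) 0) := by
      intro ε hε
      obtain ⟨δ, hδ, hsub⟩ := hF.1 (ψ u, 0) ⟨hNX (hψmemN u), h0mem⟩ ε hε
      set K := closure (Metric.thickening ε (F (ψ u) 0)) with hK
      have hKconv : Convex ℝ K := (hFpconv.thickening ε).closure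
      have hKclosed : IsClosed K := isClosed_closure
      have hS : ∀ᶠ k in (U : Filter ℕ), dist (ψs k u) (ψ u) < δ/2 ∧ |lamn k| < δ := by
        have e1 : ∀ᶠ k in (U : Filter ℕ), dist (ψs k u) (ψ u) < δ/2 :=
          Metric.tendsto_nhds.mp (hψtend u) _ (by linarith)
        have e2 : ∀ᶠ k in (U : Filter ℕ), |lamn k| < δ := by
          refine Filter.Eventually.filter_mono hU ?_
          have := Metric.tendsto_nhds.mp hlam δ hδ
          simpa [Real.dist_eq] using this
        exact e1.and e2
      have hh0 : (0:ℝ) < δ / (2 * (M + 1)) := by positivity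
      have hquot : ∀ h : ℝ, 0 < h → h < δ / (2 * (M + 1)) →
          h⁻¹ • (ψ (u + h) - ψ u) ∈ K := by
        intro h hhp hhlt
        have hk : ∀ k, dist (ψs k u) (ψ u) < δ/2 → |lamn k| < δ →
            h⁻¹ • (ψs k (u + h) - ψs k u) ∈ K := by
          intro k hk1 hk2
          have hval : ∀ τ ∈ Ioc u (u + h), ws k τ ∈ Metric.thickening ε (F (ψ u) 0) := by
            intro τ hτ
            have l1 : ‖ψs k τ - ψs k u‖ ≤ M * |τ - u| := hψdist k u τ
            have l2 : |τ - u| ≤ h := by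
              rw [abs_of_pos (by linarith [hτ.1] : (0:ℝ) < τ - u)]
              linarith [hτ.2]
            have hMh : M * h < δ/2 := by
              have e3 : M * h ≤ (M + 1) * h := by nlinarith
              have e4 : (M + 1) * h < (M + 1) * (δ / (2 * (M + 1))) := by
                have : (0:ℝ) < M + 1 := by linarith
                exact (mul_lt_mul_iff_right₀ this).mpr hhlt
              have e5 : (M + 1) * (δ / (2 * (M + 1))) = δ/2 := by
                field_simp
              linarith
            have hdψ : dist (ψs k τ) (ψ u) < δ := by
              calc dist (ψs k τ) (ψ u) ≤ dist (ψs k τ) (ψs k u) + dist (ψs k u) (ψ u) :=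
                    dist_triangle _ _ _
                _ < δ/2 + δ/2 := by
                    apply add_lt_add_of_le_of_lt _ hk1
                    rw [dist_eq_norm]
                    calc ‖ψs k τ - ψs k u‖ ≤ M * |τ - u| := l1
                      _ ≤ M * h := by gcongr
                      _ ≤ δ/2 := hMh.le
                _ = δ := by ring
            have hq : dist ((ψs k τ, lamn k)) ((ψ u, (0:ℝ))) < δ := by
              rw [Prod.dist_eq]
              apply max_lt hdψ
              rwa [Real.dist_eq, sub_zero]
            have hmem := hsub (ψs k τ, lamn k) (hmemD _ _ (hψN k τ) (hlamI k)) hq (hwF k τ)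
            rw [Metric.mem_thickening_iff]
            exact hmem
          have hint : IntegrableOn (ws k) (Ioc u (u + h)) volume := by
            have h5 := hwint k u (u + h)
            rwa [intervalIntegrable_iff_integrableOn_Ioc_of_le (by linarith)] at h5
          have hμ0 : volume (Ioc u (u + h)) ≠ 0 := by
            rw [Real.volume_Ioc, add_sub_cancel_left]
            simp [ENNReal.ofReal_eq_zero, not_le, hhp]
          have havg : (⨍ t in Ioc u (u + h), ws k t ∂volume) ∈ K := by
            refine hKconv.set_average_mem hKclosed hμ0 (ne_of_lt measure_Ioc_lt_top) ?_ hint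
            exact (ae_restrict_iff' measurableSet_Ioc).mpr
              (Eventually.of_forall fun τ hτ => subset_closure (hval τ hτ))
          rw [setAverage_eq, Real.volume_real_Ioc, add_sub_cancel_left,
            max_eq_left hhp.le] at havg
          have hrep := hwrep k u (u + h)
          have e6 : ψs k (u + h) - ψs k u = ∫ t in u..(u + h), ws k t := by
            rw [hrep]; abel
          rw [intervalIntegral.integral_of_le (by linarith : u ≤ u + h)] at e6
          rwa [← e6] at havg
        have htendq : Tendsto (fun k => h⁻¹ • (ψs k (u + h) - ψs k u)) (U : Filter ℕ)
            (𝓝 (h⁻¹ • (ψ (u + h) - ψ u))) :=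
          ((hψtend (u + h)).sub (hψtend u)).const_smul h⁻¹
        exact hKclosed.mem_of_tendsto htendq (hS.mono fun k hk2 => hk k hk2.1 hk2.2)
      have hslope : Tendsto (fun h : ℝ => h⁻¹ • (ψ (u + h) - ψ u)) (𝓝[>] (0:ℝ))
          (𝓝 (deriv ψ u)) := by
        have hsl := hdiff.hasDerivAt
        rw [hasDerivAt_iff_tendsto_slope] at hsl
        have hcomp : Tendsto (fun h : ℝ => u + h) (𝓝[>] (0:ℝ)) (𝓝[≠] u) := by
          apply tendsto_nhdsWithin_of_tendsto_nhds_of_eventually_within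
          · have h7 : Tendsto (fun h : ℝ => u + h) (𝓝 (0:ℝ)) (𝓝 u) := by
              simpa using (continuous_add_left u).tendsto (0:ℝ)
            exact h7.mono_left nhdsWithin_le_nhds
          · exact eventually_mem_nhdsWithin.mono fun h hh => by
              simp only [mem_compl_iff, mem_singleton_iff]
              intro hc
              have : h = 0 := by linarith [congrArg (fun z => z - u) hc, add_sub_cancel_left u h]
              exact absurd this (ne_of_gt hh)
        refine (hsl.comp hcomp).congr fun h => ?_
        simp only [Function.comp_apply, slope_def_module, add_sub_cancel_left]
      have hEv : ∀ᶠ h in 𝓝[>] (0:ℝ), h⁻¹ • (ψ (u + h) - ψ u) ∈ K := by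
        filter_upwards [Ioo_mem_nhdsGT_of_mem (Set.left_mem_Ico.mpr hh0)] with h hh
        exact hquot h hh.1 hh.2
      have hinK : deriv ψ u ∈ K := hKclosed.mem_of_tendsto hslope hEv
      exact (closure_minimal (Metric.thickening_subset_cthickening _ _)
        (Metric.isClosed_cthickening)) hinK
    have hcl : deriv ψ u ∈ closure (F (ψ u) 0) := by
      rw [Metric.closure_eq_iInter_cthickening]
      exact mem_iInter₂.mpr fun ε hε => hcth ε hε
    rwa [hFpc.isClosed.closure_eq] at hcl
  -- Rademacher and assembly
  have hae : ∀ᵐ t ∂(volume : Measure ℝ), DifferentiableAt ℝ ψ t :=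
    hψlip'.ae_differentiableAt_real
  have hne : ∀ t, (F (ψ t) 0).Nonempty := fun t =>
    (hF.2 (ψ t, 0) ⟨hNX (hψmemN t), h0mem⟩).2.2
  set v : ℝ → (Fin n → ℝ) :=
    fun t => if deriv ψ t ∈ F (ψ t) 0 then deriv ψ t else (hne t).some with hv
  have hveq : ∀ᵐ t ∂(volume : Measure ℝ), v t = deriv ψ t := by
    filter_upwards [hae] with t ht
    simp [hv, hkey t ht]
  have hvF : ∀ t, v t ∈ F (ψ t) 0 := by
    intro t
    by_cases h : deriv ψ t ∈ F (ψ t) 0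
    · simpa [hv, h] using h
    · simpa [hv, h] using (hne t).some_mem
  refine ⟨ψ, ⟨fun t _ => hψmemN t, v, ?_, ?_, ?_⟩, hψ0'⟩
  · intro c _ d _
    have h8 := lip_intervalIntegrable_deriv hψlip' c d
    rw [intervalIntegrable_iff] at h8 ⊢
    exact h8.congr (ae_restrict_of_ae (hveq.mono fun t ht => ht.symm))
  · exact Eventually.of_forall fun t _ => hvF t
  · intro c _ d _
    rw [lipschitz_ftc hψlip' c d]
    congr 1
    exact intervalIntegral.integral_congr_ae (hveq.mono fun t ht _ => ht.symm)
end
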